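/- arXiv:1804.00346 — 6 statements merged into one kernel-verified Lean document; each statement's English description precedes it below -/
import Mathlib

section
/- Let X and X' be i.i.d. real random variables with E[X] = 0 and E[X^2] < ∞. Then for every z ≥ 0 and every α ∈ [0,1], E[(X−X')^2 · 1{|X−X'| ≥ z}] ≤ 2·E[X^2 · 1{|X| ≥ αz}] + 2·E[X^2 · 1{|X| ≥ (1−α)z}]. -/
open MeasureTheory ProbabilityTheory

lemma harris_aux {Ω : Type*} [MeasurableSpace Ω] (μ : Measure Ω) [IsProbabilityMeasure μ]
    (g : Ω → ℝ) (hg : Integrable g μ) (c : ℝ)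
    (A : Set Ω) (hA : MeasurableSet A)
    (hge : ∀ ω ∈ A, c ≤ g ω) (hle : ∀ ω ∉ A, g ω ≤ c) :
    (∫ ω, g ω ∂μ) * (μ A).toReal ≤ ∫ ω in A, g ω ∂μ := by
  have hgA : IntegrableOn g A μ := hg.integrableOn
  have hgAc : IntegrableOn g Aᶜ μ := hg.integrableOn
  have hp : (μ A).toReal + (μ Aᶜ).toReal = 1 := by
    rw [← ENNReal.toReal_add (measure_ne_top μ A) (measure_ne_top μ Aᶜ),
      measure_add_measure_compl hA, measure_univ, ENNReal.toReal_one]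
  have hsplit : ∫ ω, g ω ∂μ = (∫ ω in A, g ω ∂μ) + ∫ ω in Aᶜ, g ω ∂μ :=
    (integral_add_compl hA hg).symm
  have h1 : c * (μ A).toReal ≤ ∫ ω in A, g ω ∂μ := by
    have := setIntegral_mono_on (f := fun _ => c) (g := g) (μ := μ)
      (integrableOn_const (measure_ne_top μ A)) hgA hA (fun x hx => hge x hx)
    simpa [setIntegral_const, smul_eq_mul, mul_comm, Measure.real] using this
  have h2 : ∫ ω in Aᶜ, g ω ∂μ ≤ c * (μ Aᶜ).toReal := by
    have := setIntegral_mono_on (f := g) (g := fun _ => c) (μ := μ)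
      hgAc (integrableOn_const (measure_ne_top μ Aᶜ)) hA.compl
      (fun x hx => hle x hx)
    simpa [setIntegral_const, smul_eq_mul, mul_comm, Measure.real] using this
  have hpA : (0:ℝ) ≤ (μ A).toReal := ENNReal.toReal_nonneg
  have hpAc : (0:ℝ) ≤ (μ Aᶜ).toReal := ENNReal.toReal_nonneg
  have key : (∫ ω in A, g ω ∂μ) * (μ A).toReal + (∫ ω in A, g ω ∂μ) * (μ Aᶜ).toReal
      = ∫ ω in A, g ω ∂μ := by rw [← mul_add, hp, mul_one]
  rw [hsplit]
  nlinarith [mul_le_mul_of_nonneg_right h2 hpA, mul_le_mul_of_nonneg_right h1 hpAc]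

lemma step_aux {Ω : Type*} [MeasurableSpace Ω] (μ : Measure Ω) [IsProbabilityMeasure μ]
    (X X' : Ω → ℝ) (hX : Measurable X) (hX' : Measurable X')
    (hindep : IndepFun X X' μ) (hid : IdentDistrib X X' μ μ)
    (hmean : ∫ ω, X ω ∂μ = 0)
    (hL2 : Integrable (fun ω => (X ω) ^ 2) μ)
    (c : ℝ) (hc : 0 ≤ c) :
    (∫ ω, (if c ≤ |X ω| then (X ω - X' ω) ^ 2 else 0) ∂μ)
      ≤ 2 * ∫ ω, (if c ≤ |X ω| then (X ω) ^ 2 else 0) ∂μ := by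
  have hsq : Measurable fun x : ℝ => x ^ 2 := by measurability
  have hSr : MeasurableSet {x : ℝ | c ≤ |x|} :=
    measurableSet_le measurable_const measurable_abs
  have hA : MeasurableSet {ω | c ≤ |X ω|} := hX hSr
  -- integrability facts
  have hXint : Integrable X μ :=
    ((memLp_two_iff_integrable_sq hX.aestronglyMeasurable).mpr hL2).integrable (by norm_num)
  have hX'int : Integrable X' μ := hid.integrable_iff.mp hXint
  have hL2' : Integrable (fun ω => (X' ω) ^ 2) μ := (hid.comp hsq).integrable_iff.mp hL2
  have hmean' : ∫ ω, X' ω ∂μ = 0 := hid.integral_eq ▸ hmean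
  -- measurable pieces
  have hfm : Measurable fun x : ℝ => if c ≤ |x| then x ^ 2 else 0 :=
    Measurable.ite hSr hsq measurable_const
  have hφm : Measurable fun x : ℝ => if c ≤ |x| then x else 0 :=
    Measurable.ite hSr measurable_id measurable_const
  have hhm : Measurable fun x : ℝ => if c ≤ |x| then (1:ℝ) else 0 :=
    Measurable.ite hSr measurable_const measurable_const
  -- integrability of pieces
  have I1 : Integrable (fun ω => if c ≤ |X ω| then (X ω) ^ 2 else 0) μ := by
    refine hL2.mono' ((hfm.comp hX).aestronglyMeasurable) ?_
    filter_upwards with ω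
    by_cases h : c ≤ |X ω| <;> simp [h, sq_nonneg, abs_of_nonneg (sq_nonneg (X ω))]
  have Iφ : Integrable (fun ω => if c ≤ |X ω| then X ω else 0) μ := by
    refine hXint.abs.mono' ((hφm.comp hX).aestronglyMeasurable) ?_
    filter_upwards with ω
    by_cases h : c ≤ |X ω| <;> simp [h, abs_nonneg]
  have Ih : Integrable (fun ω => if c ≤ |X ω| then (1:ℝ) else 0) μ := by
    refine (integrable_const (1:ℝ)).mono' ((hhm.comp hX).aestronglyMeasurable) ?_
    filter_upwards with ω
    by_cases h : c ≤ |X ω| <;> simp [h]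
  have indφ : IndepFun (fun ω => if c ≤ |X ω| then X ω else 0) X' μ :=
    hindep.comp hφm measurable_id
  have indh : IndepFun (fun ω => if c ≤ |X ω| then (1:ℝ) else 0)
      (fun ω => (X' ω) ^ 2) μ := hindep.comp hhm hsq
  have Iφmul : Integrable (fun ω => (if c ≤ |X ω| then X ω else 0) * X' ω) μ :=
    indφ.integrable_mul Iφ hX'int
  have Ihmul : Integrable (fun ω =>
      (if c ≤ |X ω| then (1:ℝ) else 0) * (X' ω) ^ 2) μ := indh.integrable_mul Ih hL2'
  have Isum : Integrable (fun ω => (if c ≤ |X ω| then (X ω) ^ 2 else 0)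
      + (if c ≤ |X ω| then (1:ℝ) else 0) * (X' ω) ^ 2) μ := I1.add Ihmul
  have Icm : Integrable (fun ω =>
      2 * ((if c ≤ |X ω| then X ω else 0) * X' ω)) μ := Iφmul.const_mul 2
  -- pointwise decomposition
  have hdecomp : (fun ω => if c ≤ |X ω| then (X ω - X' ω) ^ 2 else 0)
      = fun ω => ((if c ≤ |X ω| then (X ω) ^ 2 else 0)
          + (if c ≤ |X ω| then (1:ℝ) else 0) * (X' ω) ^ 2)
          - 2 * ((if c ≤ |X ω| then X ω else 0) * X' ω) := by
    funext ω
    by_cases h : c ≤ |X ω| <;> simp [h] <;> ring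
  rw [hdecomp]
  rw [integral_sub Isum Icm, integral_add I1 Ihmul, integral_const_mul]
  have hcross : ∫ ω, (if c ≤ |X ω| then X ω else 0) * X' ω ∂μ = 0 := by
    have h := indφ.integral_mul_eq_mul_integral Iφ.aestronglyMeasurable hX'int.aestronglyMeasurable
    rw [hmean', mul_zero] at h
    exact h
  have hprod : ∫ ω, (if c ≤ |X ω| then (1:ℝ) else 0) * (X' ω) ^ 2 ∂μ
      = (μ {ω | c ≤ |X ω|}).toReal * ∫ ω, (X ω) ^ 2 ∂μ := by
    have h2 : ∫ ω, (if c ≤ |X ω| then (1:ℝ) else 0) ∂μ = (μ {ω | c ≤ |X ω|}).toReal := by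
      have e : (fun ω => if c ≤ |X ω| then (1:ℝ) else 0)
          = Set.indicator {ω | c ≤ |X ω|} (fun _ => (1:ℝ)) := by
        funext ω; by_cases h : c ≤ |X ω| <;> simp [h, Set.indicator_apply, Set.mem_setOf_eq]
      rw [e, integral_indicator_const (1:ℝ) hA, smul_eq_mul, mul_one, Measure.real]
    have h3 : ∫ ω, (X' ω) ^ 2 ∂μ = ∫ ω, (X ω) ^ 2 ∂μ := ((hid.comp hsq).integral_eq).symm
    calc ∫ ω, (if c ≤ |X ω| then (1:ℝ) else 0) * (X' ω) ^ 2 ∂μ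
        = (∫ ω, (if c ≤ |X ω| then (1:ℝ) else 0) ∂μ) * ∫ ω, (X' ω) ^ 2 ∂μ :=
          indh.integral_mul_eq_mul_integral Ih.aestronglyMeasurable hL2'.aestronglyMeasurable
      _ = (μ {ω | c ≤ |X ω|}).toReal * ∫ ω, (X ω) ^ 2 ∂μ := by rw [h2, h3]
  rw [hcross, hprod]
  -- Harris-type bound
  have hset : ∫ ω in {ω | c ≤ |X ω|}, (X ω) ^ 2 ∂μ
      = ∫ ω, (if c ≤ |X ω| then (X ω) ^ 2 else 0) ∂μ := by
    have e : Set.indicator {ω | c ≤ |X ω|} (fun ω => (X ω) ^ 2)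
        = fun ω => if c ≤ |X ω| then (X ω) ^ 2 else 0 := by
      funext ω; by_cases h : c ≤ |X ω| <;> simp [h, Set.indicator_apply, Set.mem_setOf_eq]
    rw [← integral_indicator hA, e]
  have hharris : (∫ ω, (X ω) ^ 2 ∂μ) * (μ {ω | c ≤ |X ω|}).toReal
      ≤ ∫ ω, (if c ≤ |X ω| then (X ω) ^ 2 else 0) ∂μ := by
    have key := harris_aux μ (fun ω => (X ω) ^ 2) hL2 (c ^ 2) {ω | c ≤ |X ω|} hA
      (fun ω hω => by
        have h : c ≤ |X ω| := hω
        show c ^ 2 ≤ X ω ^ 2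
        nlinarith [sq_abs (X ω), abs_nonneg (X ω), mul_le_mul h h hc (abs_nonneg (X ω))])
      (fun ω hω => by
        have h : |X ω| < c := lt_of_not_ge hω
        show X ω ^ 2 ≤ c ^ 2
        nlinarith [sq_abs (X ω), abs_nonneg (X ω),
          mul_le_mul h.le h.le (abs_nonneg (X ω)) hc])
    rwa [hset] at key
  nlinarith [hharris]

theorem quadratic_tails_symmetrization_alpha
    {Ω : Type*} [MeasurableSpace Ω] (μ : Measure Ω) [IsProbabilityMeasure μ]
    (X X' : Ω → ℝ) (hX : Measurable X) (hX' : Measurable X')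
    (hindep : IndepFun X X' μ) (hid : IdentDistrib X X' μ μ)
    (hmean : ∫ ω, X ω ∂μ = 0)
    (hL2 : Integrable (fun ω => (X ω) ^ 2) μ)
    (z : ℝ) (hz : 0 ≤ z) (α : ℝ) (hα : α ∈ Set.Icc (0 : ℝ) 1) :
    (∫ ω, (if z ≤ |X ω - X' ω| then (X ω - X' ω) ^ 2 else 0) ∂μ)
      ≤ 2 * (∫ ω, (if α * z ≤ |X ω| then (X ω) ^ 2 else 0) ∂μ)
        + 2 * (∫ ω, (if (1 - α) * z ≤ |X ω| then (X ω) ^ 2 else 0) ∂μ) := by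
  obtain ⟨hα0, hα1⟩ := hα
  have hsq : Measurable fun x : ℝ => x ^ 2 := by measurability
  have hc1 : (0:ℝ) ≤ α * z := mul_nonneg hα0 hz
  have hc2 : (0:ℝ) ≤ (1 - α) * z := mul_nonneg (by linarith) hz
  have hXint : Integrable X μ :=
    ((memLp_two_iff_integrable_sq hX.aestronglyMeasurable).mpr hL2).integrable (by norm_num)
  have hX'int : Integrable X' μ := hid.integrable_iff.mp hXint
  have hL2' : Integrable (fun ω => (X' ω) ^ 2) μ := (hid.comp hsq).integrable_iff.mp hL2
  have hmean' : ∫ ω, X' ω ∂μ = 0 := hid.integral_eq ▸ hmean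
  have Imul : Integrable (X * X') μ := hindep.integrable_mul hXint hX'int
  have Idiff : Integrable (fun ω => (X ω - X' ω) ^ 2) μ := by
    have : (fun ω => (X ω - X' ω) ^ 2)
        = fun ω => ((X ω) ^ 2 + (X' ω) ^ 2) - 2 * (X ω * X' ω) := by
      funext ω; ring
    rw [this]
    exact (hL2.add hL2').sub (Imul.const_mul 2)
  have hdm : Measurable fun ω => X ω - X' ω := hX.sub hX'
  -- measurability of the three "if" integrands
  have hSr : ∀ c : ℝ, MeasurableSet {x : ℝ | c ≤ |x|} := fun c =>
    measurableSet_le measurable_const measurable_abs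
  have m0 : Measurable fun ω => if z ≤ |X ω - X' ω| then (X ω - X' ω) ^ 2 else 0 :=
    ((Measurable.ite (hSr z) hsq measurable_const).comp hdm)
  have m1 : Measurable fun ω => if α * z ≤ |X ω| then (X ω - X' ω) ^ 2 else 0 :=
    Measurable.ite (hX (hSr (α * z))) (hsq.comp hdm) measurable_const
  have m2 : Measurable fun ω => if (1 - α) * z ≤ |X' ω| then (X ω - X' ω) ^ 2 else 0 :=
    Measurable.ite (hX' (hSr ((1 - α) * z))) (hsq.comp hdm) measurable_const
  have I0 : Integrable (fun ω => if z ≤ |X ω - X' ω| then (X ω - X' ω) ^ 2 else 0) μ := by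
    refine Idiff.mono' m0.aestronglyMeasurable ?_
    filter_upwards with ω
    by_cases h : z ≤ |X ω - X' ω| <;>
      simp [h, abs_of_nonneg (sq_nonneg (X ω - X' ω)), sq_nonneg]
  have I1 : Integrable (fun ω => if α * z ≤ |X ω| then (X ω - X' ω) ^ 2 else 0) μ := by
    refine Idiff.mono' m1.aestronglyMeasurable ?_
    filter_upwards with ω
    by_cases h : α * z ≤ |X ω| <;>
      simp [h, abs_of_nonneg (sq_nonneg (X ω - X' ω)), sq_nonneg]
  have I2 : Integrable (fun ω => if (1 - α) * z ≤ |X' ω| then (X ω - X' ω) ^ 2 else 0) μ := by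
    refine Idiff.mono' m2.aestronglyMeasurable ?_
    filter_upwards with ω
    by_cases h : (1 - α) * z ≤ |X' ω| <;>
      simp [h, abs_of_nonneg (sq_nonneg (X ω - X' ω)), sq_nonneg]
  -- pointwise bound
  have hpt : ∀ ω, (if z ≤ |X ω - X' ω| then (X ω - X' ω) ^ 2 else 0)
      ≤ (if α * z ≤ |X ω| then (X ω - X' ω) ^ 2 else 0)
        + (if (1 - α) * z ≤ |X' ω| then (X ω - X' ω) ^ 2 else 0) := by
    intro ω
    by_cases h0 : z ≤ |X ω - X' ω|
    · by_cases h1 : α * z ≤ |X ω|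
      · by_cases h2 : (1 - α) * z ≤ |X' ω| <;> simp [h0, h1, h2, sq_nonneg]
      · have htri : |X ω - X' ω| ≤ |X ω| + |X' ω| := abs_sub (X ω) (X' ω)
        have h2 : (1 - α) * z ≤ |X' ω| := by
          push_neg at h1; nlinarith
        simp [h0, h1, h2]
    · by_cases h1 : α * z ≤ |X ω| <;> by_cases h2 : (1 - α) * z ≤ |X' ω| <;>
        simp [h0, h1, h2, sq_nonneg] <;> positivity
  have hstep1 := step_aux μ X X' hX hX' hindep hid hmean hL2 (α * z) hc1
  have hstep2 := step_aux μ X' X hX' hX hindep.symm hid.symm hmean' hL2'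
    ((1 - α) * z) hc2
  -- transform hstep2
  have hswap : (fun ω => if (1 - α) * z ≤ |X' ω| then (X' ω - X ω) ^ 2 else 0)
      = fun ω => if (1 - α) * z ≤ |X' ω| then (X ω - X' ω) ^ 2 else 0 := by
    funext ω; by_cases h : (1 - α) * z ≤ |X' ω| <;> simp [h] <;> ring
  have htail : ∫ ω, (if (1 - α) * z ≤ |X' ω| then (X' ω) ^ 2 else 0) ∂μ
      = ∫ ω, (if (1 - α) * z ≤ |X ω| then (X ω) ^ 2 else 0) ∂μ := by
    exact ((hid.comp (Measurable.ite (hSr ((1 - α) * z)) hsq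
      measurable_const)).integral_eq).symm
  rw [hswap, htail] at hstep2
  calc (∫ ω, (if z ≤ |X ω - X' ω| then (X ω - X' ω) ^ 2 else 0) ∂μ)
      ≤ ∫ ω, ((if α * z ≤ |X ω| then (X ω - X' ω) ^ 2 else 0)
          + (if (1 - α) * z ≤ |X' ω| then (X ω - X' ω) ^ 2 else 0)) ∂μ :=
        integral_mono I0 (I1.add I2) hpt
    _ = (∫ ω, (if α * z ≤ |X ω| then (X ω - X' ω) ^ 2 else 0) ∂μ)
        + ∫ ω, (if (1 - α) * z ≤ |X' ω| then (X ω - X' ω) ^ 2 else 0) ∂μ :=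
        integral_add I1 I2
    _ ≤ _ := by linarith
end

section
/- For every z > 0, the supremum over all zero-mean random variables X with finite positive second moment of the ratio E[(X−X')^2 · 1{|X−X'| ≥ z}] / E[X^2 · 1{|X| ≥ z/2}] equals 4, where X' is an independent copy of X. In particular, the two-point distributions P(X = qz) = p, P(X = −pz) = q with q = 1−p and p → 1/2+ attain the supremum in the limit. -/
open MeasureTheory ProbabilityTheory

lemma my_integrable_dirac {α : Type*} [MeasurableSpace α] [MeasurableSingletonClass α]
    {f : α → ℝ} (hf : Measurable f) (x : α) : Integrable f (Measure.dirac x) := by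
  refine ⟨hf.aestronglyMeasurable, ?_⟩
  rw [HasFiniteIntegral, lintegral_dirac]
  exact ENNReal.coe_lt_top

lemma my_integral_smul_add_smul {α : Type*} [MeasurableSpace α] {f : α → ℝ}
    {μ₁ μ₂ : Measure α} (h1 : Integrable f μ₁) (h2 : Integrable f μ₂)
    {p q : ℝ} (hp : 0 ≤ p) (hq : 0 ≤ q) :
    ∫ x, f x ∂(ENNReal.ofReal p • μ₁ + ENNReal.ofReal q • μ₂)
      = p * ∫ x, f x ∂μ₁ + q * ∫ x, f x ∂μ₂ := by
  rw [integral_add_measure (h1.smul_measure ENNReal.ofReal_ne_top)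
      (h2.smul_measure ENNReal.ofReal_ne_top), integral_smul_measure, integral_smul_measure,
      ENNReal.toReal_ofReal hp, ENNReal.toReal_ofReal hq, smul_eq_mul, smul_eq_mul]

lemma my_smul_prod (c : ENNReal) (μ ν : Measure ℝ) [SFinite μ] [SFinite ν] :
    (c • μ).prod ν = c • (μ.prod ν) := by
  ext s hs
  rw [Measure.prod_apply hs, Measure.smul_apply, Measure.prod_apply hs,
    lintegral_smul_measure, smul_eq_mul]

lemma my_prod_smul (c : ENNReal) (hc : c ≠ ⊤) (μ ν : Measure ℝ) [SFinite μ] [SFinite ν] :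
    μ.prod (c • ν) = c • (μ.prod ν) := by
  ext s hs
  rw [Measure.prod_apply hs, Measure.smul_apply, Measure.prod_apply hs, smul_eq_mul,
    ← lintegral_const_mul' _ _ hc]
  simp [Measure.smul_apply]

lemma ratio_le_four (z : ℝ) (hz : 0 < z) (ν : Measure ℝ) [IsProbabilityMeasure ν]
    (hm2 : Integrable (fun x => x ^ 2) ν) (hmean : (∫ x, x ∂ν) = 0)
    (hT : 0 < (∫ x, (if z / 2 ≤ |x| then x ^ 2 else 0) ∂ν)) :
    (∫ q : ℝ × ℝ, (if z ≤ |q.1 - q.2| then (q.1 - q.2) ^ 2 else 0) ∂(ν.prod ν)) /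
        (∫ x, (if z / 2 ≤ |x| then x ^ 2 else 0) ∂ν) ≤ 4 := by
  set ind : ℝ → ℝ := fun x => if z / 2 ≤ |x| then 1 else 0 with hind_def
  have hA : MeasurableSet {x : ℝ | z / 2 ≤ |x|} :=
    measurableSet_le measurable_const measurable_id.abs
  have hind_meas : Measurable ind := Measurable.ite hA measurable_const measurable_const
  have hind_nonneg : ∀ x, 0 ≤ ind x := by
    intro x; simp only [hind_def]; split <;> norm_num
  have hind_le_one : ∀ x, ind x ≤ 1 := by
    intro x; simp only [hind_def]; split <;> norm_num
  set ui : ℝ → ℝ := fun x => x ^ 2 * ind x with hui_def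
  have hg_eq : (fun x : ℝ => if z / 2 ≤ |x| then x ^ 2 else 0) = ui := by
    funext x; simp only [hui_def, hind_def]; split <;> simp
  rw [hg_eq] at hT ⊢
  set T : ℝ := ∫ x, ui x ∂ν with hT_def
  set m2 : ℝ := ∫ x, x ^ 2 ∂ν with hm2_def
  set μR : ℝ := ∫ x, ind x ∂ν with hμ_def
  -- integrabilities
  have i_ui : Integrable ui ν := by
    refine hm2.mono' ((hm2.aestronglyMeasurable.aemeasurable.mul
      hind_meas.aemeasurable).aestronglyMeasurable) ?_
    filter_upwards with x
    rw [Real.norm_eq_abs, abs_mul, abs_of_nonneg (sq_nonneg x), abs_of_nonneg (hind_nonneg x)]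
    nlinarith [sq_nonneg x, hind_le_one x, hind_nonneg x]
  have i_one : Integrable (fun _ : ℝ => (1:ℝ)) ν := integrable_const 1
  have i_ind : Integrable ind ν := by
    refine i_one.mono' hind_meas.aestronglyMeasurable ?_
    filter_upwards with x
    rw [Real.norm_eq_abs, abs_of_nonneg (hind_nonneg x)]; exact hind_le_one x
  have i_id : Integrable (fun x : ℝ => x) ν := by
    refine (i_one.add hm2).mono' measurable_id.aestronglyMeasurable ?_
    filter_upwards with x
    simp only [Pi.add_apply, Real.norm_eq_abs, id]
    nlinarith [sq_nonneg (|x| - 1), sq_abs x]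
  have i_uxi : Integrable (fun x : ℝ => x * ind x) ν := by
    refine (i_one.add hm2).mono' (measurable_id.mul hind_meas).aestronglyMeasurable ?_
    filter_upwards with x
    simp only [Pi.add_apply, Real.norm_eq_abs]
    rw [abs_mul, abs_of_nonneg (hind_nonneg x)]
    nlinarith [abs_nonneg x, hind_le_one x, hind_nonneg x, sq_nonneg (|x| - 1), sq_abs x]
  have h_one : (∫ _ : ℝ, (1:ℝ) ∂ν) = 1 := by simp
  -- basic facts
  have hμ0 : 0 ≤ μR := integral_nonneg hind_nonneg
  have hμ1 : μR ≤ 1 := by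
    have := integral_mono i_ind i_one hind_le_one
    rwa [h_one] at this
  have hTμ : (z / 2) ^ 2 * μR ≤ T := by
    have hp : ∀ x, (z / 2) ^ 2 * ind x ≤ ui x := by
      intro x
      simp only [hui_def, hind_def]
      split
      · rename_i h
        have : (z / 2) ^ 2 ≤ x ^ 2 := by
          rw [← sq_abs x]
          exact pow_le_pow_left₀ (by linarith) h 2
        simpa using this
      · simp
    have := integral_mono (i_ind.const_mul ((z / 2) ^ 2)) i_ui hp
    rwa [integral_const_mul] at this
  have hI : m2 - T ≤ (z / 2) ^ 2 * (1 - μR) := by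
    have hp : ∀ x, x ^ 2 - ui x ≤ (z / 2) ^ 2 * (1 - ind x) := by
      intro x
      simp only [hui_def, hind_def]
      split
      · simp
      · rename_i h
        push_neg at h
        have : x ^ 2 ≤ (z / 2) ^ 2 := by
          rw [← sq_abs x]
          exact pow_le_pow_left₀ (abs_nonneg x) (le_of_lt h) 2
        simpa using this
    have h2 := integral_mono (f := fun x : ℝ => x ^ 2 - ui x)
      (g := fun x : ℝ => (z / 2) ^ 2 * (1 - ind x)) (hm2.sub i_ui)
      (((integrable_const (1:ℝ)).sub i_ind).const_mul ((z / 2) ^ 2)) hp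
    rwa [integral_sub hm2 i_ui, integral_const_mul, integral_sub i_one i_ind, h_one] at h2
  have hkey : m2 * μR ≤ T := by
    nlinarith [mul_le_mul_of_nonneg_right hI hμ0,
      mul_le_mul_of_nonneg_left hTμ (by linarith : (0:ℝ) ≤ 1 - μR)]
  -- the majorant H
  set H : ℝ × ℝ → ℝ := fun zz =>
    ui zz.1 * 1 + zz.1 ^ 2 * ind zz.2 + ind zz.1 * zz.2 ^ 2 + 1 * ui zz.2
      + (-2 * (zz.1 * ind zz.1)) * zz.2 + zz.1 * (-2 * (zz.2 * ind zz.2)) with hH_def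
  have hH_eq : ∀ x y : ℝ, H (x, y) = (x - y) ^ 2 * (ind x + ind y) := by
    intro x y; simp only [hH_def, hui_def]; ring
  have i1 : Integrable (fun zz : ℝ × ℝ => ui zz.1 * 1) (ν.prod ν) := i_ui.mul_prod i_one
  have i2 : Integrable (fun zz : ℝ × ℝ => zz.1 ^ 2 * ind zz.2) (ν.prod ν) := hm2.mul_prod i_ind
  have i3 : Integrable (fun zz : ℝ × ℝ => ind zz.1 * zz.2 ^ 2) (ν.prod ν) := i_ind.mul_prod hm2
  have i4 : Integrable (fun zz : ℝ × ℝ => 1 * ui zz.2) (ν.prod ν) := i_one.mul_prod i_ui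
  have i5 : Integrable (fun zz : ℝ × ℝ => (-2 * (zz.1 * ind zz.1)) * zz.2) (ν.prod ν) :=
    (i_uxi.const_mul (-2)).mul_prod i_id
  have i6 : Integrable (fun zz : ℝ × ℝ => zz.1 * (-2 * (zz.2 * ind zz.2))) (ν.prod ν) :=
    i_id.mul_prod (i_uxi.const_mul (-2))
  have iH : Integrable H (ν.prod ν) := ((((i1.add i2).add i3).add i4).add i5).add i6
  have hFle : ∀ zz : ℝ × ℝ, (if z ≤ |zz.1 - zz.2| then (zz.1 - zz.2) ^ 2 else 0) ≤ H zz := by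
    rintro ⟨x, y⟩
    rw [hH_eq x y]
    by_cases hxy : z ≤ |x - y|
    · rw [if_pos hxy]
      have h1 : 1 ≤ ind x + ind y := by
        by_cases hx : z / 2 ≤ |x|
        · have h2 := hind_nonneg y
          have h3 : ind x = 1 := by simp only [hind_def]; rw [if_pos hx]
          linarith
        · by_cases hy : z / 2 ≤ |y|
          · have h2 := hind_nonneg x
            have h3 : ind y = 1 := by simp only [hind_def]; rw [if_pos hy]
            linarith
          · exfalso
            push_neg at hx hy
            have h3 := abs_sub x y
            linarith
      nlinarith [sq_nonneg (x - y)]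
    · rw [if_neg hxy]
      have := hind_nonneg x; have := hind_nonneg y
      nlinarith [sq_nonneg (x - y)]
  have hN_le : (∫ q : ℝ × ℝ, (if z ≤ |q.1 - q.2| then (q.1 - q.2) ^ 2 else 0) ∂(ν.prod ν))
      ≤ ∫ zz, H zz ∂(ν.prod ν) := by
    refine integral_mono_of_nonneg ?_ iH (Filter.Eventually.of_forall hFle)
    filter_upwards with zz
    split <;> positivity
  -- compute ∫ H
  have s1 : (∫ zz, H zz ∂(ν.prod ν)) =
      (∫ zz : ℝ × ℝ, (ui zz.1 * 1 + zz.1 ^ 2 * ind zz.2 + ind zz.1 * zz.2 ^ 2 + 1 * ui zz.2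
        + (-2 * (zz.1 * ind zz.1)) * zz.2) ∂(ν.prod ν))
      + (∫ zz : ℝ × ℝ, zz.1 * (-2 * (zz.2 * ind zz.2)) ∂(ν.prod ν)) :=
    integral_add ((((i1.add i2).add i3).add i4).add i5) i6
  have s2 : (∫ zz : ℝ × ℝ, (ui zz.1 * 1 + zz.1 ^ 2 * ind zz.2 + ind zz.1 * zz.2 ^ 2 + 1 * ui zz.2
        + (-2 * (zz.1 * ind zz.1)) * zz.2) ∂(ν.prod ν)) =
      (∫ zz : ℝ × ℝ, (ui zz.1 * 1 + zz.1 ^ 2 * ind zz.2 + ind zz.1 * zz.2 ^ 2 + 1 * ui zz.2)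
        ∂(ν.prod ν))
      + (∫ zz : ℝ × ℝ, (-2 * (zz.1 * ind zz.1)) * zz.2 ∂(ν.prod ν)) :=
    integral_add (((i1.add i2).add i3).add i4) i5
  have s3 : (∫ zz : ℝ × ℝ, (ui zz.1 * 1 + zz.1 ^ 2 * ind zz.2 + ind zz.1 * zz.2 ^ 2 + 1 * ui zz.2)
        ∂(ν.prod ν)) =
      (∫ zz : ℝ × ℝ, (ui zz.1 * 1 + zz.1 ^ 2 * ind zz.2 + ind zz.1 * zz.2 ^ 2) ∂(ν.prod ν))
      + (∫ zz : ℝ × ℝ, 1 * ui zz.2 ∂(ν.prod ν)) :=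
    integral_add ((i1.add i2).add i3) i4
  have s4 : (∫ zz : ℝ × ℝ, (ui zz.1 * 1 + zz.1 ^ 2 * ind zz.2 + ind zz.1 * zz.2 ^ 2) ∂(ν.prod ν)) =
      (∫ zz : ℝ × ℝ, (ui zz.1 * 1 + zz.1 ^ 2 * ind zz.2) ∂(ν.prod ν))
      + (∫ zz : ℝ × ℝ, ind zz.1 * zz.2 ^ 2 ∂(ν.prod ν)) :=
    integral_add (i1.add i2) i3
  have s5 : (∫ zz : ℝ × ℝ, (ui zz.1 * 1 + zz.1 ^ 2 * ind zz.2) ∂(ν.prod ν)) =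
      (∫ zz : ℝ × ℝ, ui zz.1 * 1 ∂(ν.prod ν))
      + (∫ zz : ℝ × ℝ, zz.1 ^ 2 * ind zz.2 ∂(ν.prod ν)) :=
    integral_add i1 i2
  have e1 : (∫ zz : ℝ × ℝ, ui zz.1 * 1 ∂(ν.prod ν))
      = (∫ x, ui x ∂ν) * (∫ _ : ℝ, (1:ℝ) ∂ν) := integral_prod_mul ui (fun _ => (1:ℝ))
  have e2 : (∫ zz : ℝ × ℝ, zz.1 ^ 2 * ind zz.2 ∂(ν.prod ν))
      = (∫ x, x ^ 2 ∂ν) * (∫ x, ind x ∂ν) := integral_prod_mul (fun x => x ^ 2) ind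
  have e3 : (∫ zz : ℝ × ℝ, ind zz.1 * zz.2 ^ 2 ∂(ν.prod ν))
      = (∫ x, ind x ∂ν) * (∫ x, x ^ 2 ∂ν) := integral_prod_mul ind (fun x => x ^ 2)
  have e4 : (∫ zz : ℝ × ℝ, 1 * ui zz.2 ∂(ν.prod ν))
      = (∫ _ : ℝ, (1:ℝ) ∂ν) * (∫ x, ui x ∂ν) := integral_prod_mul (fun _ => (1:ℝ)) ui
  have e5 : (∫ zz : ℝ × ℝ, (-2 * (zz.1 * ind zz.1)) * zz.2 ∂(ν.prod ν))
      = (∫ x, -2 * (x * ind x) ∂ν) * (∫ x, x ∂ν) :=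
    integral_prod_mul (fun x => -2 * (x * ind x)) (fun x => x)
  have e6 : (∫ zz : ℝ × ℝ, zz.1 * (-2 * (zz.2 * ind zz.2)) ∂(ν.prod ν))
      = (∫ x, x ∂ν) * (∫ x, -2 * (x * ind x) ∂ν) :=
    integral_prod_mul (fun x => x) (fun x => -2 * (x * ind x))
  have hH_int : (∫ zz, H zz ∂(ν.prod ν)) = 2 * T + 2 * (m2 * μR) := by
    rw [s1, s2, s3, s4, s5, e1, e2, e3, e4, e5, e6, h_one, hmean, ← hT_def, ← hm2_def, ← hμ_def]
    ring
  rw [div_le_iff₀ hT]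
  rw [hH_int] at hN_le
  linarith

lemma two_point_mem (z : ℝ) (hz : 0 < z) {p : ℝ} (hp : 1 / 2 < p) (hp1 : p < 1) :
    ∃ ν : Measure ℝ, IsProbabilityMeasure ν ∧
        Integrable (fun x => x ^ 2) ν ∧ (∫ x, x ∂ν) = 0 ∧
        0 < (∫ x, (if z / 2 ≤ |x| then x ^ 2 else 0) ∂ν) ∧
        2 / p = (∫ q : ℝ × ℝ, (if z ≤ |q.1 - q.2| then (q.1 - q.2) ^ 2 else 0) ∂(ν.prod ν)) /
            (∫ x, (if z / 2 ≤ |x| then x ^ 2 else 0) ∂ν) := by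
  have hp0 : (0:ℝ) < p := by linarith
  set q : ℝ := 1 - p with hq_def
  have hq0 : (0:ℝ) < q := by rw [hq_def]; linarith
  have hqh : q < 1 / 2 := by rw [hq_def]; linarith
  set a : ℝ := q * z with ha_def
  set b : ℝ := -(p * z) with hb_def
  set ν : Measure ℝ :=
    ENNReal.ofReal p • Measure.dirac a + ENNReal.ofReal q • Measure.dirac b with hν_def
  have int_dirac : ∀ {f : ℝ → ℝ}, Measurable f → ∀ x, Integrable f (Measure.dirac x) :=
    fun hf x => my_integrable_dirac hf x
  have hint : ∀ {f : ℝ → ℝ}, Measurable f → Integrable f ν := by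
    intro f hf
    rw [hν_def]
    exact ((int_dirac hf a).smul_measure ENNReal.ofReal_ne_top).add_measure
      ((int_dirac hf b).smul_measure ENNReal.ofReal_ne_top)
  have hIν : ∀ {f : ℝ → ℝ}, Measurable f → (∫ x, f x ∂ν) = p * f a + q * f b := by
    intro f hf
    rw [hν_def, my_integral_smul_add_smul (int_dirac hf a) (int_dirac hf b) hp0.le hq0.le,
      integral_dirac, integral_dirac]
  have hprob : IsProbabilityMeasure ν := by
    constructor
    rw [hν_def]
    simp only [Measure.add_apply, Measure.smul_apply, smul_eq_mul,
      measure_univ, mul_one]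
    rw [← ENNReal.ofReal_add hp0.le hq0.le]
    rw [hq_def]
    norm_num
  refine ⟨ν, hprob, hint (measurable_id.pow_const 2), ?_, ?_, ?_⟩
  · rw [hIν (f := fun x => x) measurable_id]
    simp only [ha_def, hb_def]
    ring
  · have hAmeas : Measurable (fun x : ℝ => if z / 2 ≤ |x| then x ^ 2 else 0) :=
      Measurable.ite (measurableSet_le measurable_const measurable_id.abs)
        (measurable_id.pow_const 2) measurable_const
    rw [hIν hAmeas]
    have hga : (if z / 2 ≤ |a| then a ^ 2 else 0) = 0 := by
      rw [if_neg]
      rw [ha_def, abs_of_pos (by positivity)]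
      nlinarith
    have hgb : (if z / 2 ≤ |b| then b ^ 2 else 0) = (p * z) ^ 2 := by
      rw [hb_def, abs_neg, abs_of_pos (by positivity), if_pos (by nlinarith)]
      ring
    rw [hga, hgb]
    positivity
  · -- the ratio
    have hAmeas : Measurable (fun x : ℝ => if z / 2 ≤ |x| then x ^ 2 else 0) :=
      Measurable.ite (measurableSet_le measurable_const measurable_id.abs)
        (measurable_id.pow_const 2) measurable_const
    have hFmeas : Measurable (fun w : ℝ × ℝ => if z ≤ |w.1 - w.2| then (w.1 - w.2) ^ 2 else 0) :=
      Measurable.ite (measurableSet_le measurable_const (measurable_fst.sub measurable_snd).abs)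
        ((measurable_fst.sub measurable_snd).pow_const 2) measurable_const
    -- denominator
    have hga : (if z / 2 ≤ |a| then a ^ 2 else 0) = 0 := by
      rw [if_neg]
      rw [ha_def, abs_of_pos (by positivity)]
      nlinarith
    have hgb : (if z / 2 ≤ |b| then b ^ 2 else 0) = (p * z) ^ 2 := by
      rw [hb_def, abs_neg, abs_of_pos (by positivity), if_pos (by nlinarith)]
      ring
    have hD : (∫ x, (if z / 2 ≤ |x| then x ^ 2 else 0) ∂ν) = q * (p * z) ^ 2 := by
      rw [hIν hAmeas, hga, hgb]; ring
    -- product measure decomposition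
    have hprod : ν.prod ν = ENNReal.ofReal p •
          (ENNReal.ofReal p • Measure.dirac (a, a) + ENNReal.ofReal q • Measure.dirac (a, b))
        + ENNReal.ofReal q •
          (ENNReal.ofReal p • Measure.dirac (b, a) + ENNReal.ofReal q • Measure.dirac (b, b)) := by
      rw [hν_def]
      simp only [Measure.add_prod, my_smul_prod, Measure.prod_add,
        my_prod_smul _ ENNReal.ofReal_ne_top, Measure.dirac_prod_dirac, smul_add]
      rw [smul_comm (ENNReal.ofReal p) (ENNReal.ofReal q) (Measure.dirac (b, a)),
        smul_comm (ENNReal.ofReal q) (ENNReal.ofReal p) (Measure.dirac (a, b))]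
      abel
    have int_diracP : ∀ x : ℝ × ℝ,
        Integrable (fun w : ℝ × ℝ => if z ≤ |w.1 - w.2| then (w.1 - w.2) ^ 2 else 0)
          (Measure.dirac x) := fun x => my_integrable_dirac hFmeas x
    have hN : (∫ w : ℝ × ℝ, (if z ≤ |w.1 - w.2| then (w.1 - w.2) ^ 2 else 0) ∂(ν.prod ν))
        = 2 * p * q * z ^ 2 := by
      rw [hprod]
      rw [my_integral_smul_add_smul
        (((int_diracP (a, a)).smul_measure ENNReal.ofReal_ne_top).add_measure
          ((int_diracP (a, b)).smul_measure ENNReal.ofReal_ne_top))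
        (((int_diracP (b, a)).smul_measure ENNReal.ofReal_ne_top).add_measure
          ((int_diracP (b, b)).smul_measure ENNReal.ofReal_ne_top)) hp0.le hq0.le,
        my_integral_smul_add_smul (int_diracP (a, a)) (int_diracP (a, b)) hp0.le hq0.le,
        my_integral_smul_add_smul (int_diracP (b, a)) (int_diracP (b, b)) hp0.le hq0.le,
        integral_dirac, integral_dirac, integral_dirac, integral_dirac]
      have hab : a - b = z := by rw [ha_def, hb_def, hq_def]; ring
      have hba : b - a = -z := by rw [ha_def, hb_def, hq_def]; ring
      simp only [hab, hba]
      rw [if_neg (by simp; linarith), if_pos (by rw [abs_of_pos hz]),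
        if_pos (by rw [abs_neg, abs_of_pos hz]), if_neg (by simp; linarith)]
      ring
    rw [hN, hD]
    field_simp

/-- The supremum over all centered distributions (with positive truncated second moment)
of the ratio of the symmetrized quadratic tail at level `z` to the quadratic tail at
level `z/2` equals `4`. -/
theorem quadratic_tails_ratio_sup_eq_four (z : ℝ) (hz : 0 < z) :
    IsLUB {r : ℝ | ∃ ν : Measure ℝ, IsProbabilityMeasure ν ∧
        Integrable (fun x => x ^ 2) ν ∧ (∫ x, x ∂ν) = 0 ∧
        0 < (∫ x, (if z / 2 ≤ |x| then x ^ 2 else 0) ∂ν) ∧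
        r = (∫ q : ℝ × ℝ, (if z ≤ |q.1 - q.2| then (q.1 - q.2) ^ 2 else 0) ∂(ν.prod ν)) /
            (∫ x, (if z / 2 ≤ |x| then x ^ 2 else 0) ∂ν)} 4 := by
  constructor
  · rintro r ⟨ν, hprob, hm2, hmean, hT, rfl⟩
    haveI := hprob
    exact ratio_le_four z hz ν hm2 hmean hT
  · intro w hw
    have h83 : (8:ℝ) / 3 ≤ w := by
      obtain ⟨ν, h1, h2, h3, h4, h5⟩ := two_point_mem z hz (p := 3/4) (by norm_num) (by norm_num)
      have hmem := hw ⟨ν, h1, h2, h3, h4, h5⟩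
      norm_num at hmem
      linarith
    by_contra hlt
    push_neg at hlt
    have hw0 : (0:ℝ) < w := by linarith
    have h2w : (1:ℝ)/2 < 2 / w := by
      rw [lt_div_iff₀ hw0]; linarith
    set c : ℝ := min 1 (2 / w) with hc_def
    have hc : (1:ℝ)/2 < c := lt_min (by norm_num) h2w
    set p : ℝ := (1/2 + c)/2 with hp_def
    have hpc : p < c := by rw [hp_def]; linarith
    have hp : (1:ℝ)/2 < p := by rw [hp_def]; linarith
    have hp1 : p < 1 := lt_of_lt_of_le hpc (min_le_left _ _)
    have hp0 : (0:ℝ) < p := by linarith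
    obtain ⟨ν, h1, h2, h3, h4, h5⟩ := two_point_mem z hz hp hp1
    have hmem := hw ⟨ν, h1, h2, h3, h4, h5⟩
    have hp2w : p < 2 / w := lt_of_lt_of_le hpc (min_le_right _ _)
    have : p * w < 2 := (lt_div_iff₀ hw0).mp hp2w
    have : w < 2 / p := by rw [lt_div_iff₀ hp0]; linarith
    linarith
end

section
/- The function g(θ) = a(θ)/b(θ), where a(θ) = 2(1−cos θ)/θ^2 − sin θ/(2θ) and b(θ) = (1−cos θ)/θ^4 − sin θ/(2θ^3), is strictly monotonically increasing on [0, 2π) (with g(0) = 12 defined by continuity), and sup over θ ∈ (0, 2π) of a(θ)/b(θ) equals the limit as θ → 2π−, which is 4π². -/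
noncomputable def a (θ : ℝ) : ℝ :=
  2 * (1 - Real.cos θ) / θ ^ 2 - Real.sin θ / (2 * θ)

noncomputable def b (θ : ℝ) : ℝ :=
  (1 - Real.cos θ) / θ ^ 4 - Real.sin θ / (2 * θ ^ 3)

noncomputable def g (θ : ℝ) : ℝ := if θ = 0 then 12 else a θ / b θ

open Real Set Filter

set_option maxHeartbeats 2000000

noncomputable def f (u : ℝ) : ℝ :=
  4*u^2*(2*Real.sin u - u*Real.cos u)/(Real.sin u - u*Real.cos u)

lemma mono_aux {f f' : ℝ → ℝ} (hf : ∀ t, HasDerivAt f (f' t) t)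
    (h0 : ∀ t, 0 ≤ t → 0 ≤ f' t) {x : ℝ} (hx : 0 ≤ x) : f 0 ≤ f x := by
  have hm : MonotoneOn f (Icc 0 x) := by
    apply monotoneOn_of_deriv_nonneg (convex_Icc 0 x)
      (fun t _ => (hf t).continuousAt.continuousWithinAt)
    · intro t ht
      rw [interior_Icc] at ht
      exact (hf t).hasDerivWithinAt.differentiableWithinAt
    · intro t ht
      rw [interior_Icc] at ht
      rw [(hf t).deriv]
      exact h0 t ht.1.le
  exact hm ⟨le_rfl, hx⟩ ⟨hx, le_rfl⟩ hx

lemma sin_lb3 {x : ℝ} (hx : 0 ≤ x) : x - x^3/6 ≤ Real.sin x := by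
  have := mono_aux (f := fun t => Real.sin t - (t - t^3/6))
    (f' := fun t => Real.cos t - (1 - t^2/2)) (fun t => by
      have h := (Real.hasDerivAt_sin t).sub
        ((hasDerivAt_id t).sub (((hasDerivAt_pow 3 t)).div_const 6))
      refine h.congr_deriv ?_ <;> ring)
    (fun t ht => by nlinarith [Real.one_sub_sq_div_two_le_cos (x := t)]) hx
  simp at this
  linarith

lemma cos_ub4 {x : ℝ} (hx : 0 ≤ x) : Real.cos x ≤ 1 - x^2/2 + x^4/24 := by
  have := mono_aux (f := fun t => (1 - t^2/2 + t^4/24) - Real.cos t)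
    (f' := fun t => Real.sin t - (t - t^3/6)) (fun t => by
      have h := (((hasDerivAt_const t (1:ℝ)).sub ((hasDerivAt_pow 2 t).div_const 2)).add
        ((hasDerivAt_pow 4 t).div_const 24)).sub (Real.hasDerivAt_cos t)
      refine h.congr_deriv ?_; ring)
    (fun t ht => by linarith [sin_lb3 ht]) hx
  simp at this; linarith

lemma sin_ub5 {x : ℝ} (hx : 0 ≤ x) : Real.sin x ≤ x - x^3/6 + x^5/120 := by
  have := mono_aux (f := fun t => (t - t^3/6 + t^5/120) - Real.sin t)
    (f' := fun t => (1 - t^2/2 + t^4/24) - Real.cos t) (fun t => by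
      have h := (((hasDerivAt_id t).sub ((hasDerivAt_pow 3 t).div_const 6)).add
        ((hasDerivAt_pow 5 t).div_const 120)).sub (Real.hasDerivAt_sin t)
      refine h.congr_deriv ?_; ring)
    (fun t ht => by linarith [cos_ub4 ht]) hx
  simp at this; linarith

lemma cos_lb6 {x : ℝ} (hx : 0 ≤ x) : 1 - x^2/2 + x^4/24 - x^6/720 ≤ Real.cos x := by
  have := mono_aux (f := fun t => Real.cos t - (1 - t^2/2 + t^4/24 - t^6/720))
    (f' := fun t => (t - t^3/6 + t^5/120) - Real.sin t) (fun t => by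
      have h := (Real.hasDerivAt_cos t).sub ((((hasDerivAt_const t (1:ℝ)).sub
        ((hasDerivAt_pow 2 t).div_const 2)).add
        ((hasDerivAt_pow 4 t).div_const 24)).sub ((hasDerivAt_pow 6 t).div_const 720))
      refine h.congr_deriv ?_; ring)
    (fun t ht => by linarith [sin_ub5 ht]) hx
  simp at this; linarith

lemma sin_lb7 {x : ℝ} (hx : 0 ≤ x) : x - x^3/6 + x^5/120 - x^7/5040 ≤ Real.sin x := by
  have := mono_aux (f := fun t => Real.sin t - (t - t^3/6 + t^5/120 - t^7/5040))
    (f' := fun t => Real.cos t - (1 - t^2/2 + t^4/24 - t^6/720)) (fun t => by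
      have h := (Real.hasDerivAt_sin t).sub ((((hasDerivAt_id t).sub
        ((hasDerivAt_pow 3 t).div_const 6)).add
        ((hasDerivAt_pow 5 t).div_const 120)).sub ((hasDerivAt_pow 7 t).div_const 5040))
      refine h.congr_deriv ?_; ring)
    (fun t ht => by linarith [cos_lb6 ht]) hx
  simp at this; linarith

lemma cos_ub8 {x : ℝ} (hx : 0 ≤ x) :
    Real.cos x ≤ 1 - x^2/2 + x^4/24 - x^6/720 + x^8/40320 := by
  have := mono_aux (f := fun t => (1 - t^2/2 + t^4/24 - t^6/720 + t^8/40320) - Real.cos t)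
    (f' := fun t => Real.sin t - (t - t^3/6 + t^5/120 - t^7/5040)) (fun t => by
      have h := (((((hasDerivAt_const t (1:ℝ)).sub ((hasDerivAt_pow 2 t).div_const 2)).add
        ((hasDerivAt_pow 4 t).div_const 24)).sub ((hasDerivAt_pow 6 t).div_const 720)).add
        ((hasDerivAt_pow 8 t).div_const 40320)).sub (Real.hasDerivAt_cos t)
      refine h.congr_deriv ?_; ring)
    (fun t ht => by linarith [sin_lb7 ht]) hx
  simp at this; linarith

lemma Qpos {u : ℝ} (hu : 0 < u) (huπ : u ≤ π) : 0 < Real.sin u - u * Real.cos u := by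
  have hπ : u ≤ 3.1416 := huπ.trans (by linarith [Real.pi_lt_d6])
  have h1 := sin_lb3 hu.le
  have h2 := cos_ub8 hu.le
  have h3 : u * Real.cos u ≤ u * (1 - u^2/2 + u^4/24 - u^6/720 + u^8/40320) :=
    mul_le_mul_of_nonneg_left h2 hu.le
  have ht2 : u^2 ≤ 9.8697 := by nlinarith
  have hpoly : 0 < u^3/3 - u^5/24 + u^7/720 - u^9/40320 := by
    have h4 : 0 < u^3 := pow_pos hu 3
    have f1 : 0 ≤ u^4 * (9.8697 - u^2) := mul_nonneg (by positivity) (by nlinarith)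
    have f2 : 0 < (11.8 - u^2) * (24 - u^2) := by nlinarith
    have key : 0 < 13440 - 1680*u^2 + 56*u^4 - u^6 := by nlinarith
    have := mul_pos h4 key
    nlinarith
  nlinarith

lemma mono_aux2 {f f' : ℝ → ℝ} {x : ℝ} (hx : 0 ≤ x)
    (hf : ∀ t ∈ Icc 0 x, HasDerivAt f (f' t) t)
    (h0 : ∀ t ∈ Icc 0 x, 0 ≤ f' t) : f 0 ≤ f x := by
  have hm : MonotoneOn f (Icc 0 x) := by
    apply monotoneOn_of_deriv_nonneg (convex_Icc 0 x)
      (fun t ht => (hf t ht).continuousAt.continuousWithinAt)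
    · intro t ht
      rw [interior_Icc] at ht
      exact (hf t (Ioo_subset_Icc_self ht)).hasDerivWithinAt.differentiableWithinAt
    · intro t ht
      rw [interior_Icc] at ht
      rw [(hf t (Ioo_subset_Icc_self ht)).deriv]
      exact h0 t (Ioo_subset_Icc_self ht)
  exact hm ⟨le_rfl, hx⟩ ⟨hx, le_rfl⟩ hx

lemma tan_lb {u : ℝ} (hu : 0 ≤ u) (hu2 : u < π/2) :
    u + u^3/3 + 2*u^5/15 + 17*u^7/315 ≤ Real.tan u := by
  have hcos : ∀ t ∈ Icc 0 u, Real.cos t ≠ 0 := fun t ht =>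
    (Real.cos_pos_of_mem_Ioo ⟨by linarith [Real.pi_pos, ht.1], lt_of_le_of_lt ht.2 hu2⟩).ne'
  have htan : ∀ t ∈ Icc 0 u, t ≤ Real.tan t := fun t ht =>
    Real.le_tan ht.1 (lt_of_le_of_lt ht.2 hu2)
  have hsq : ∀ t ∈ Icc 0 u, 1 / Real.cos t ^ 2 = 1 + Real.tan t ^ 2 := by
    intro t ht
    rw [one_div, ← Real.inv_one_add_tan_sq (hcos t ht), inv_inv]
  -- step 2
  have step2 : ∀ v, 0 ≤ v → v < π/2 → v + v^3/3 ≤ Real.tan v := by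
    intro v hv hv2
    have hcv : ∀ t ∈ Icc 0 v, Real.cos t ≠ 0 := fun t ht =>
      (Real.cos_pos_of_mem_Ioo ⟨by linarith [Real.pi_pos, ht.1], lt_of_le_of_lt ht.2 hv2⟩).ne'
    have := mono_aux2 (f := fun t => Real.tan t - (t + t^3/3))
      (f' := fun t => 1 / Real.cos t ^ 2 - (1 + t^2)) hv
      (fun t ht => by
        have h := (Real.hasDerivAt_tan (hcv t ht)).sub
          ((hasDerivAt_id t).add ((hasDerivAt_pow 3 t).div_const 3))
        refine h.congr_deriv ?_; ring)
      (fun t ht => by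
        have h1 : t ≤ Real.tan t := Real.le_tan ht.1 (lt_of_le_of_lt ht.2 hv2)
        have h2 : 1 / Real.cos t ^ 2 = 1 + Real.tan t ^ 2 := by
          rw [one_div, ← Real.inv_one_add_tan_sq (hcv t ht), inv_inv]
        show 0 ≤ 1 / Real.cos t ^ 2 - (1 + t^2)
        rw [h2]; nlinarith [ht.1])
    simp [Real.tan_zero] at this; linarith
  -- step 3
  have step3 : ∀ v, 0 ≤ v → v < π/2 → v + v^3/3 + 2*v^5/15 ≤ Real.tan v := by
    intro v hv hv2
    have hcv : ∀ t ∈ Icc 0 v, Real.cos t ≠ 0 := fun t ht =>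
      (Real.cos_pos_of_mem_Ioo ⟨by linarith [Real.pi_pos, ht.1], lt_of_le_of_lt ht.2 hv2⟩).ne'
    have := mono_aux2 (f := fun t => Real.tan t - (t + t^3/3 + 2*t^5/15))
      (f' := fun t => 1 / Real.cos t ^ 2 - (1 + t^2 + 2*t^4/3)) hv
      (fun t ht => by
        have h := (Real.hasDerivAt_tan (hcv t ht)).sub
          (((hasDerivAt_id t).add ((hasDerivAt_pow 3 t).div_const 3)).add
            (((hasDerivAt_pow 5 t).const_mul 2).div_const 15))
        refine h.congr_deriv ?_; ring)
      (fun t ht => by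
        have h1 : t + t^3/3 ≤ Real.tan t := step2 t ht.1 (lt_of_le_of_lt ht.2 hv2)
        have h2 : 1 / Real.cos t ^ 2 = 1 + Real.tan t ^ 2 := by
          rw [one_div, ← Real.inv_one_add_tan_sq (hcv t ht), inv_inv]
        show 0 ≤ 1 / Real.cos t ^ 2 - (1 + t^2 + 2*t^4/3)
        rw [h2]; nlinarith [ht.1, pow_nonneg ht.1 3])
    simp [Real.tan_zero] at this; linarith
  -- step 4
  have := mono_aux2 (f := fun t => Real.tan t - (t + t^3/3 + 2*t^5/15 + 17*t^7/315))
    (f' := fun t => 1 / Real.cos t ^ 2 - (1 + t^2 + 2*t^4/3 + 17*t^6/45)) hu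
    (fun t ht => by
      have h := (Real.hasDerivAt_tan (hcos t ht)).sub
        ((((hasDerivAt_id t).add ((hasDerivAt_pow 3 t).div_const 3)).add
          (((hasDerivAt_pow 5 t).const_mul 2).div_const 15)).add
          (((hasDerivAt_pow 7 t).const_mul 17).div_const 315))
      refine h.congr_deriv ?_; ring)
    (fun t ht => by
      have h1 : t + t^3/3 + 2*t^5/15 ≤ Real.tan t := step3 t ht.1 (lt_of_le_of_lt ht.2 hu2)
      show 0 ≤ 1 / Real.cos t ^ 2 - (1 + t^2 + 2*t^4/3 + 17*t^6/45)
      rw [hsq t ht]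
      nlinarith [ht.1, pow_nonneg ht.1 3, pow_nonneg ht.1 5, pow_nonneg ht.1 4,
        sq_nonneg (t^4), sq_nonneg (t^5)])
  simp [Real.tan_zero] at this; linarith

lemma Epos1 {u : ℝ} (hu : 0 < u) (hu2 : u < π/2) :
    0 < 4*Real.sin u^2 - 5*(u*(Real.sin u*Real.cos u)) + 2*(u^2*Real.cos u^2) - u^2 := by
  have hub : u ≤ 1.5708 := by
    have := Real.pi_lt_d6
    linarith
  have hT := tan_lb hu.le hu2
  have ht : u^2 ≤ 2.46741264 := by nlinarith
  have hP : 0 < (4-u^2)*(u + u^3/3 + 2*u^5/15 + 17*u^7/315)^2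
      - 5*u*(u + u^3/3 + 2*u^5/15 + 17*u^7/315) + u^2 := by
    have hkey : (4-u^2)*(u + u^3/3 + 2*u^5/15 + 17*u^7/315)^2
        - 5*u*(u + u^3/3 + 2*u^5/15 + 17*u^7/315) + u^2 =
        u^6 * (8/45 + 44/315*u^2 + 86/4725*u^4 + 2/525*u^6
          - 272/99225*u^8 - 289/99225*u^10) := by ring
    rw [hkey]
    have h6 : 0 < u^6 := pow_pos hu 6
    have hR : 0 < 8/45 + 44/315*u^2 + 86/4725*u^4 + 2/525*u^6
        - 272/99225*u^8 - 289/99225*u^10 := by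
      nlinarith [pow_pos hu 2, pow_pos hu 4, pow_pos hu 6, pow_pos hu 8,
        mul_le_mul_of_nonneg_left ht (pow_pos hu 6).le,
        mul_le_mul_of_nonneg_left ht (pow_pos hu 8).le]
    positivity
  have h3 : 0 ≤ (4-u^2)*(Real.tan u - (u + u^3/3 + 2*u^5/15 + 17*u^7/315)) :=
    mul_nonneg (by nlinarith) (sub_nonneg.2 hT)
  have hA : 0 ≤ (4-u^2)*(Real.tan u + (u + u^3/3 + 2*u^5/15 + 17*u^7/315)) - 5*u := by
    have hA' : 0 ≤ 3*u + 2/3*u^3 + 2/5*u^5 + 52/315*u^7 - 34/315*u^9 := by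
      nlinarith [mul_le_mul_of_nonneg_left ht (pow_pos hu 7).le,
        mul_le_mul_of_nonneg_left ht (pow_pos hu 5).le, pow_pos hu 5, pow_pos hu 3]
    nlinarith
  have hH : 0 < (4-u^2)*Real.tan u^2 - 5*u*Real.tan u + u^2 := by
    nlinarith [mul_nonneg (sub_nonneg.2 hT) hA]
  have hc : 0 < Real.cos u := Real.cos_pos_of_mem_Ioo ⟨by linarith [Real.pi_pos], hu2⟩
  have hpyth := Real.sin_sq_add_cos_sq u
  have hE : 4*Real.sin u^2 - 5*(u*(Real.sin u*Real.cos u)) + 2*(u^2*Real.cos u^2) - u^2 =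
      Real.cos u^2 * ((4-u^2)*Real.tan u^2 - 5*u*Real.tan u + u^2) := by
    rw [Real.tan_eq_sin_div_cos]
    field_simp
    linear_combination (u^2) * hpyth
  rw [hE]
  exact mul_pos (pow_pos hc 2) hH

lemma Qnonneg {t : ℝ} (h0 : 0 ≤ t) (h : t ≤ π) : 0 ≤ Real.sin t - t * Real.cos t := by
  rcases h0.eq_or_lt with rfl | ht
  · simp
  · exact (Qpos ht h).le

lemma Epos2 {u : ℝ} (hu : π/2 ≤ u) (hu2 : u ≤ 3*π/4) :
    0 < 4*Real.sin u^2 - 5*(u*(Real.sin u*Real.cos u)) + 2*(u^2*Real.cos u^2) - u^2 := by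
  have hπl := Real.pi_gt_d6
  have hπu := Real.pi_lt_d6
  obtain ⟨t, htdef⟩ : ∃ t, t = u - π/2 := ⟨_, rfl⟩
  have hueq : u = t + π/2 := by rw [htdef]; ring
  have hs : Real.sin u = Real.cos t := by
    rw [hueq, Real.sin_add_pi_div_two]
  have hc : Real.cos u = -Real.sin t := by
    rw [hueq, Real.cos_add_pi_div_two]
  have ht0 : 0 ≤ t := by rw [htdef]; linarith
  have ht4 : t ≤ π/4 := by rw [htdef]; linarith
  rw [hueq]
  have hσ0 : 0 < Real.cos t := Real.cos_pos_of_mem_Ioo ⟨by linarith, by linarith⟩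
  have hγ0 : 0 ≤ Real.sin t := Real.sin_nonneg_of_nonneg_of_le_pi ht0 (by linarith)
  have h1 : Real.cos t * t ≤ Real.sin t := by have := Qnonneg ht0 (by linarith); linarith
  have h5 := Real.sin_sq_add_cos_sq t
  have key3 : 0 < 4 + 5*(t+π/2)*t + (t+π/2)^2*t^2 - (t+π/2)^2 := by nlinarith
  have key1 : (t+π/2)^2*(Real.cos t * t)^2 ≤ (t+π/2)^2*(Real.sin t)^2 := by
    have := mul_le_mul h1 h1 (mul_nonneg hσ0.le ht0) hγ0
    nlinarith [sq_nonneg (t+π/2)]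
  have key2 : 5*(t+π/2)*Real.cos t*(Real.cos t * t) ≤ 5*(t+π/2)*Real.cos t*Real.sin t := by
    apply mul_le_mul_of_nonneg_left h1
    have h9 : (0:ℝ) < t+π/2 := by linarith
    positivity
  have keyσ : 0 < Real.cos t^2 * (4 + 5*(t+π/2)*t + (t+π/2)^2*t^2 - (t+π/2)^2) :=
    mul_pos (pow_pos hσ0 2) key3
  have hs' : Real.sin (t+π/2) = Real.cos t := Real.sin_add_pi_div_two t
  have hc' : Real.cos (t+π/2) = -Real.sin t := Real.cos_add_pi_div_two t
  rw [hs', hc']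
  nlinarith [key1, key2, keyσ]

lemma Epos3 {u : ℝ} (hu : 3*π/4 ≤ u) (hu2 : u < π) :
    0 < 4*Real.sin u^2 - 5*(u*(Real.sin u*Real.cos u)) + 2*(u^2*Real.cos u^2) - u^2 := by
  have hπl := Real.pi_gt_d6
  obtain ⟨v, hvdef⟩ : ∃ v, v = π - u := ⟨_, rfl⟩
  have hueq : u = π - v := by rw [hvdef]; ring
  have hs : Real.sin u = Real.sin v := by rw [hueq, Real.sin_pi_sub]
  have hc : Real.cos u = -Real.cos v := by rw [hueq, Real.cos_pi_sub]
  have hv0 : 0 < v := by rw [hvdef]; linarith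
  have hv4 : v ≤ π/4 := by rw [hvdef]; linarith
  have hsv : 0 < Real.sin v := Real.sin_pos_of_pos_of_lt_pi hv0 (by linarith)
  have hcs : Real.sin v ≤ Real.cos v := by
    have h := Real.cos_nonneg_of_mem_Icc (x := v + π/4)
      ⟨by linarith, by linarith⟩
    rw [Real.cos_add, Real.cos_pi_div_four, Real.sin_pi_div_four] at h
    have h2 : (0:ℝ) < Real.sqrt 2 / 2 := by positivity
    nlinarith
  have h5 := Real.sin_sq_add_cos_sq v
  have hu0 : (0:ℝ) < u := by linarith
  rw [hs, hc]
  nlinarith [mul_pos hsv hsv, mul_nonneg (mul_nonneg hu0.le hsv.le) (hsv.le.trans hcs),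
    mul_nonneg (sub_nonneg.2 hcs) (by linarith : (0:ℝ) ≤ Real.sin v + Real.cos v),
    sq_nonneg u, mul_pos hu0 hu0]

lemma Epos {u : ℝ} (hu : 0 < u) (hu2 : u < π) :
    0 < 4*Real.sin u^2 - 5*(u*(Real.sin u*Real.cos u)) + 2*(u^2*Real.cos u^2) - u^2 := by
  rcases lt_or_ge u (π/2) with h | h
  · exact Epos1 hu h
  rcases le_or_gt u (3*π/4) with h2 | h2
  · exact Epos2 h h2
  · exact Epos3 h2.le hu2

lemma Gpos {u : ℝ} (hu : 0 < u) (hu2 : u < π) :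
    0 < Real.sin u * (2*u^2-3) + u*Real.cos u*(3-u^2) := by
  have hπl := Real.pi_gt_d6
  have hπu := Real.pi_lt_d6
  rcases le_or_gt u 1.2 with hA | hA
  · -- region A
    have h1 : (u - u^3/6 + u^5/120)*(2*u^2-3) ≤ Real.sin u * (2*u^2-3) := by
      apply mul_le_mul_of_nonpos_right (sin_ub5 hu.le)
      nlinarith
    have h2 : (1 - u^2/2 + u^4/24 - u^6/720)*(u*(3-u^2)) ≤ Real.cos u * (u*(3-u^2)) := by
      apply mul_le_mul_of_nonneg_right (cos_lb6 hu.le)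
      nlinarith
    have hpoly : 0 < u^5*(4/15 - 7/240*u^2 + 1/720*u^4) := by
      have : 0 < 4/15 - 7/240*u^2 + 1/720*u^4 := by nlinarith [sq_nonneg (u^2 - 10.5)]
      positivity
    nlinarith [h1, h2, hpoly]
  rcases le_or_gt (u^2) 1.5 with hB | hB
  · -- region B : 1.2 < u, u^2 ≤ 1.5 (so u < π/2)
    have hcltpi2 : u < π/2 := by nlinarith
    have hs1 : Real.sin u ≤ 1 := Real.sin_le_one u
    have h1 : 2*u^2 - 3 ≤ Real.sin u * (2*u^2-3) := by
      nlinarith [Real.sin_nonneg_of_nonneg_of_le_pi hu.le hu2.le]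
    have h2 : (1 - u^2/2 + u^4/24 - u^6/720)*(u*(3-u^2)) ≤ Real.cos u * (u*(3-u^2)) := by
      apply mul_le_mul_of_nonneg_right (cos_lb6 hu.le)
      nlinarith
    have hub : u ≤ 1.2248 := by nlinarith
    have hc33 : (0.33:ℝ) ≤ 1 - u^2/2 + u^4/24 - u^6/720 := by
      nlinarith [pow_pos hu 2, pow_pos hu 4, mul_le_mul_of_nonneg_left hB (pow_pos hu 2).le,
        mul_le_mul_of_nonneg_left hB (pow_pos hu 4).le]
    have hq : (1.8:ℝ) ≤ u*(3-u^2) := by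
      nlinarith [mul_nonneg (sub_nonneg.2 hA.le) (sub_nonneg.2 hub)]
    nlinarith [h1, h2, mul_le_mul hc33 hq (by norm_num) (by nlinarith : (0:ℝ) ≤ 1 - u^2/2 + u^4/24 - u^6/720)]
  rcases le_or_gt (u^2) 3 with hC | hC
  ·
    rcases lt_or_ge u (π/2) with hD | hD
    · -- still below π/2 : cos u > 0, 2u^2-3 ≥ 0, 3-u^2 ≥ 0
      have hc : 0 < Real.cos u := Real.cos_pos_of_mem_Ioo ⟨by linarith, hD⟩
      have hs : 0 < Real.sin u := Real.sin_pos_of_pos_of_lt_pi hu hu2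
      nlinarith [mul_pos hu hc]
    · have hu3 : u ≤ 1.7321 := by nlinarith
      have hπ2l : (1.570796:ℝ) ≤ π/2 := by linarith
      have hπ2u : π/2 ≤ (1.5708:ℝ) := by linarith
      have ht0 : 0 ≤ u - π/2 := by linarith
      have ht4 : u - π/2 ≤ 0.1614 := by linarith
      have hsin : Real.sin u = Real.cos (u - π/2) := by
        have := Real.sin_add_pi_div_two (u - π/2)
        rw [sub_add_cancel] at this
        exact this
      have hcos : Real.cos u = -Real.sin (u - π/2) := by
        have := Real.cos_add_pi_div_two (u - π/2)
        rw [sub_add_cancel] at this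
        exact this
      have hsq : (u - π/2)^2 ≤ (0.02604996:ℝ) := by nlinarith
      have hs_lb : (0.986:ℝ) ≤ Real.sin u := by
        rw [hsin]
        have := Real.one_sub_sq_div_two_le_cos (x := u - π/2)
        linarith
      have hc_ub : -Real.cos u ≤ 0.1614 := by
        rw [hcos, neg_neg]
        linarith [Real.sin_le ht0]
      have hc_np : 0 ≤ -Real.cos u := by
        rw [hcos, neg_neg]
        exact Real.sin_nonneg_of_nonneg_of_le_pi ht0 (by linarith)
      have k1 : (0.986:ℝ)*(2*u^2-3) ≤ Real.sin u*(2*u^2-3) :=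
        mul_le_mul_of_nonneg_right hs_lb (by nlinarith)
      have k2 : u*(-Real.cos u)*(3-u^2) ≤ u*(0.1614:ℝ)*(3-u^2) := by
        have h36 : (0:ℝ) ≤ 3 - u^2 := by nlinarith
        have := mul_le_mul_of_nonneg_left hc_ub (by linarith : (0:ℝ) ≤ u)
        exact mul_le_mul_of_nonneg_right this h36
      have hul : (1.570796:ℝ) ≤ u := by linarith
      have hq2 : (2.4674:ℝ) ≤ u^2 := by nlinarith
      have hq3 : (3.875:ℝ) ≤ u^3 := by nlinarith
      nlinarith [k1, k2, hq2, hq3]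
  · -- region D : u^2 > 3
    have hs : 0 < Real.sin u := Real.sin_pos_of_pos_of_lt_pi hu hu2
    have hcn : Real.cos u ≤ 0 := by
      apply Real.cos_nonpos_of_pi_div_two_le_of_le
      · nlinarith
      · linarith
    have h9 : 0 ≤ u * (-Real.cos u) * (u^2 - 3) :=
      mul_nonneg (mul_nonneg hu.le (neg_nonneg.2 hcn)) (by nlinarith)
    nlinarith [mul_pos hs (show (0:ℝ) < 2*u^2-3 by nlinarith)]

lemma f_hasDeriv {u : ℝ} (hu : 0 < u) (hu2 : u < π) :
    HasDerivAt f ((4*u*(4*Real.sin u^2 - 5*(u*(Real.sin u*Real.cos u))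
      + 2*(u^2*Real.cos u^2) - u^2))/(Real.sin u - u*Real.cos u)^2) u := by
  have hQ : Real.sin u - u * Real.cos u ≠ 0 := (Qpos hu hu2.le).ne'
  have hQd : HasDerivAt (fun x => Real.sin x - x*Real.cos x) (u*Real.sin u) u := by
    have h := (Real.hasDerivAt_sin u).sub ((hasDerivAt_id' (x := u)).mul (Real.hasDerivAt_cos u))
    refine h.congr_deriv ?_
    ring
  have hNd : HasDerivAt (fun x => 4*x^2*(2*Real.sin x - x*Real.cos x))
      (8*u*(2*Real.sin u - u*Real.cos u) + 4*u^2*(Real.cos u + u*Real.sin u)) u := by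
    have h := (((hasDerivAt_pow 2 u).const_mul 4).mul
      (((Real.hasDerivAt_sin u).const_mul 2).sub ((hasDerivAt_id' (x := u)).mul (Real.hasDerivAt_cos u))))
    refine h.congr_deriv ?_
    simp only [Pi.sub_apply, Pi.mul_apply]
    push_cast
    ring
  have h := hNd.div hQd hQ
  refine h.congr_deriv ?_
  have hpyth := Real.sin_sq_add_cos_sq u
  field_simp
  linear_combination (-4*u^2) * hpyth

lemma f_mono : StrictMonoOn f (Ioo 0 π) := by
  apply strictMonoOn_of_deriv_pos (convex_Ioo 0 π)
  · exact fun u hu => (f_hasDeriv hu.1 hu.2).continuousAt.continuousWithinAt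
  · intro u hu
    rw [interior_Ioo] at hu
    rw [(f_hasDeriv hu.1 hu.2).deriv]
    exact div_pos (mul_pos (by linarith [hu.1]) (Epos hu.1 hu.2))
      (pow_pos (Qpos hu.1 hu.2.le) 2)

lemma f_gt_12 {u : ℝ} (hu : 0 < u) (hu2 : u < π) : 12 < f u := by
  have hQ := Qpos hu hu2.le
  rw [f, lt_div_iff₀ hQ]
  nlinarith [Gpos hu hu2]

lemma ab_eq {u : ℝ} (hu : 0 < u) (hu2 : u < π) : a (2*u) / b (2*u) = f u := by
  have hpyth := Real.sin_sq_add_cos_sq u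
  have hcos2 : Real.cos (2*u) = 1 - 2*Real.sin u^2 := by
    have h := Real.cos_two_mul u
    linarith
  have hsin2 : Real.sin (2*u) = 2*(Real.sin u*Real.cos u) := by rw [Real.sin_two_mul]; ring
  have hu0 : u ≠ 0 := hu.ne'
  have hs : 0 < Real.sin u := Real.sin_pos_of_pos_of_lt_pi hu hu2
  have hQ : 0 < Real.sin u - u * Real.cos u := Qpos hu hu2.le
  have ha : a (2*u) = Real.sin u*(2*Real.sin u - u*Real.cos u)/(2*u^2) := by
    rw [a, hcos2, hsin2]; field_simp; ring
  have hb : b (2*u) = Real.sin u*(Real.sin u - u*Real.cos u)/(8*u^4) := by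
    rw [b, hcos2, hsin2]; field_simp; ring
  have hbne : b (2*u) ≠ 0 := by
    rw [hb]
    have h9 : 0 < Real.sin u*(Real.sin u - u*Real.cos u) := mul_pos hs hQ
    positivity
  rw [div_eq_iff hbne, ha, hb, f]
  field_simp
  ring

lemma ab_eq' {θ : ℝ} (hθ : 0 < θ) (hθ2 : θ < 2*π) : a θ / b θ = f (θ/2) := by
  have h := ab_eq (u := θ/2) (by linarith) (by linarith)
  rwa [show 2*(θ/2) = θ by ring] at h

lemma g_eq {θ : ℝ} (hθ : 0 < θ) (hθ2 : θ < 2*π) : g θ = f (θ/2) := by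
  rw [g, if_neg hθ.ne', ab_eq' hθ hθ2]

lemma g_mono : StrictMonoOn g (Set.Ico 0 (2 * Real.pi)) := by
  intro x hx y hy hxy
  have hy0 : 0 < y := lt_of_le_of_lt hx.1 hxy
  rw [g_eq hy0 hy.2]
  rcases eq_or_lt_of_le hx.1 with h0 | h0
  · have hg0 : g x = 12 := by rw [← h0]; simp [g]
    rw [hg0]
    exact f_gt_12 (by linarith) (by linarith [hy.2])
  · rw [g_eq h0 (lt_trans hxy hy.2)]
    exact f_mono ⟨by linarith, by linarith [lt_trans hxy hy.2]⟩
      ⟨by linarith, by linarith [hy.2]⟩ (by linarith)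

lemma tendsto_ab : Filter.Tendsto (fun θ => a θ / b θ)
    (nhdsWithin (2 * Real.pi) (Set.Iio (2 * Real.pi))) (nhds (4 * Real.pi ^ 2)) := by
  have hQπ : Real.sin π - π * Real.cos π ≠ 0 := (Qpos Real.pi_pos le_rfl).ne'
  have hfc : ContinuousAt f π := by
    apply ContinuousAt.div
    · fun_prop
    · fun_prop
    · exact hQπ
  have hfπ : f π = 4 * π ^ 2 := by
    rw [f, Real.sin_pi, Real.cos_pi]
    have hπ : π ≠ 0 := Real.pi_ne_zero
    field_simp
    ring
  have hhalf : Tendsto (fun θ : ℝ => θ/2) (nhdsWithin (2*π) (Iio (2*π))) (nhds π) := by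
    have h1 : Tendsto (fun θ : ℝ => θ/2) (nhds (2*π)) (nhds ((2*π)/2)) :=
      (continuous_id.div_const 2).continuousAt
    rw [show (2*π)/2 = π by ring] at h1
    exact h1.mono_left nhdsWithin_le_nhds
  have hcomp : Tendsto (fun θ => f (θ/2)) (nhdsWithin (2*π) (Iio (2*π))) (nhds (4*π^2)) := by
    rw [← hfπ]
    exact hfc.tendsto.comp hhalf
  apply hcomp.congr'
  filter_upwards [self_mem_nhdsWithin, nhdsWithin_le_nhds (Ioi_mem_nhds (by positivity : (0:ℝ) < 2*π))]
    with θ h1 h2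
  exact (ab_eq' h2 h1).symm

lemma g_lub : IsLUB {r : ℝ | ∃ θ ∈ Set.Ioo (0 : ℝ) (2 * Real.pi), r = a θ / b θ}
    (4 * Real.pi ^ 2) := by
  constructor
  · rintro r ⟨θ, hθ, rfl⟩
    have key : ∀ᶠ θ' in nhdsWithin (2*π) (Iio (2*π)), a θ / b θ ≤ a θ' / b θ' := by
      filter_upwards [self_mem_nhdsWithin, nhdsWithin_le_nhds (Ioi_mem_nhds hθ.2)]
        with θ' h1 h2
      have h1' : θ' < 2*π := h1
      have h2' : θ < θ' := h2
      have hθ'0 : 0 < θ' := lt_trans hθ.1 h2'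
      rw [ab_eq' hθ.1 hθ.2, ab_eq' hθ'0 h1']
      exact (f_mono ⟨by linarith [hθ.1], by linarith [hθ.2]⟩
        ⟨by linarith, by linarith⟩ (by linarith)).le
    exact ge_of_tendsto tendsto_ab key
  · intro c hc
    refine le_of_tendsto tendsto_ab ?_
    filter_upwards [self_mem_nhdsWithin,
      nhdsWithin_le_nhds (Ioi_mem_nhds (by positivity : (0:ℝ) < 2*π))] with θ h1 h2
    exact hc ⟨θ, ⟨h2, h1⟩, rfl⟩

theorem g_strictMono_and_sup :
    StrictMonoOn g (Set.Ico 0 (2 * Real.pi)) ∧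
    IsLUB {r : ℝ | ∃ θ ∈ Set.Ioo (0 : ℝ) (2 * Real.pi), r = a θ / b θ}
      (4 * Real.pi ^ 2) ∧
    Filter.Tendsto (fun θ => a θ / b θ)
      (nhdsWithin (2 * Real.pi) (Set.Iio (2 * Real.pi))) (nhds (4 * Real.pi ^ 2)) := by
  exact ⟨g_mono, g_lub, tendsto_ab⟩
end

section
/- The equation 8(cos x − 1) + 8x sin x − 4x² cos x − x³ sin x = 0 has a unique root x₀ in the interval (0, 2π], and this root lies in (π, 2π). -/
open Real Set

noncomputable def gg (u : ℝ) : ℝ := (u ^ 2 - 1) * Real.sin u + u * Real.cos u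

lemma gg_hasDeriv (u : ℝ) :
    HasDerivAt gg (u * Real.sin u + u ^ 2 * Real.cos u) u := by
  have h1 : HasDerivAt (fun u : ℝ => (u ^ 2 - 1) * Real.sin u)
      ((2 * u) * Real.sin u + (u ^ 2 - 1) * Real.cos u) u := by
    have := ((hasDerivAt_pow 2 u).sub_const 1).mul (Real.hasDerivAt_sin u)
    exact this.congr_deriv (by simp)
  have h2 : HasDerivAt (fun u : ℝ => u * Real.cos u)
      (1 * Real.cos u + u * (-Real.sin u)) u :=
    (hasDerivAt_id u).mul (Real.hasDerivAt_cos u)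
  have := h1.add h2
  refine this.congr_deriv ?_
  ring

lemma gg_cont : Continuous gg := by
  unfold gg; fun_prop

lemma gg_pos {u : ℝ} (h0 : 0 < u) (h1 : u ≤ 2.1) : 0 < gg u := by
  unfold gg
  have hπ1 : Real.pi > 3.141592 := Real.pi_gt_d6
  have hπ2 : Real.pi < 3.141593 := Real.pi_lt_d6
  rcases le_or_gt u 1 with hu1 | hu1
  · have hs : Real.sin u ≤ u := Real.sin_le h0.le
    have hc : 1 - u ^ 2 / 2 ≤ Real.cos u := Real.one_sub_sq_div_two_le_cos
    have h1u : 0 ≤ 1 - u ^ 2 := by nlinarith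
    nlinarith [mul_nonneg (by linarith : 0 ≤ u - Real.sin u) h1u,
      mul_le_mul_of_nonneg_left hc h0.le, pow_pos h0 3]
  rcases le_or_gt u (Real.pi / 2) with hu2 | hu2
  · have hsp : 0 < Real.sin u := Real.sin_pos_of_pos_of_lt_pi h0 (by nlinarith)
    have hcp : 0 ≤ Real.cos u := Real.cos_nonneg_of_mem_Icc ⟨by linarith, hu2⟩
    nlinarith [mul_pos (by nlinarith : (0:ℝ) < u ^ 2 - 1) hsp, mul_nonneg h0.le hcp]
  · have hv0 : 0 ≤ u - Real.pi / 2 := by linarith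
    have hvle : u - Real.pi / 2 ≤ 0.53 := by linarith
    have hs : Real.sin u = Real.cos (u - Real.pi / 2) := by
      rw [show u - Real.pi / 2 = -(Real.pi / 2 - u) by ring, Real.cos_neg,
        Real.cos_pi_div_two_sub]
    have hc : Real.cos u = -Real.sin (u - Real.pi / 2) := by
      rw [show u - Real.pi / 2 = -(Real.pi / 2 - u) by ring, Real.sin_neg,
        Real.sin_pi_div_two_sub, neg_neg]
    have hs' : 1 - (u - Real.pi / 2) ^ 2 / 2 ≤ Real.sin u := by
      rw [hs]; exact Real.one_sub_sq_div_two_le_cos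
    have hc' : -(u - Real.pi / 2) ≤ Real.cos u := by
      rw [hc]; have := Real.sin_le hv0; linarith
    have hA : (0.859:ℝ) ≤ Real.sin u := by nlinarith
    have hB : (1.46:ℝ) ≤ u ^ 2 - 1 := by nlinarith
    have h3 : (1.46:ℝ) * 0.859 ≤ (u ^ 2 - 1) * Real.sin u :=
      mul_le_mul hB hA (by norm_num) (by nlinarith)
    have h4 : u * (-(u - Real.pi / 2)) ≤ u * Real.cos u :=
      mul_le_mul_of_nonneg_left hc' h0.le
    have h5 : u * (u - Real.pi / 2) ≤ 2.1 * 0.53 :=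
      mul_le_mul (by linarith) hvle hv0 (by norm_num)
    nlinarith

lemma gg_pi : gg Real.pi = -Real.pi := by
  unfold gg; simp

lemma gg_anti : StrictAntiOn gg (Set.Icc 2.1 Real.pi) := by
  have hπ1 : Real.pi > 3.141592 := Real.pi_gt_d6
  have hπ2 : Real.pi < 3.141593 := Real.pi_lt_d6
  apply strictAntiOn_of_deriv_neg (convex_Icc _ _) gg_cont.continuousOn
  intro u hu
  rw [interior_Icc] at hu
  rw [(gg_hasDeriv u).deriv]
  have h0 : (0:ℝ) < u := by linarith [hu.1]
  have hcu : Real.cos u < -(1/2) := by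
    have h23 : Real.cos (2 * Real.pi / 3) = -(1/2) := by
      rw [show 2 * Real.pi / 3 = Real.pi - Real.pi / 3 by ring, Real.cos_pi_sub,
        Real.cos_pi_div_three]
    rw [← h23]
    apply Real.cos_lt_cos_of_nonneg_of_le_pi (by positivity) hu.2.le
    nlinarith [hu.1]
  have hsu : Real.sin u ≤ 1 := Real.sin_le_one u
  nlinarith [hu.1, mul_lt_mul_of_pos_left hcu (by nlinarith : (0:ℝ) < u ^ 2)]

lemma phi_pos {u : ℝ} (h0 : 0 < u) (h1 : u ≤ Real.pi) :
    0 < Real.sin u - u * Real.cos u := by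
  have key : StrictMonoOn (fun u : ℝ => Real.sin u - u * Real.cos u)
      (Set.Icc 0 Real.pi) := by
    apply strictMonoOn_of_deriv_pos (convex_Icc _ _) (by fun_prop)
    intro v hv
    rw [interior_Icc] at hv
    have hd : HasDerivAt (fun u : ℝ => Real.sin u - u * Real.cos u)
        (Real.cos v - (1 * Real.cos v + v * (-Real.sin v))) v :=
      (Real.hasDerivAt_sin v).sub ((hasDerivAt_id v).mul (Real.hasDerivAt_cos v))
    rw [hd.deriv]
    have := Real.sin_pos_of_pos_of_lt_pi hv.1 hv.2
    nlinarith [hv.1]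
  have := key (Set.left_mem_Icc.2 Real.pi_pos.le) ⟨h0.le, h1⟩ h0
  simpa using this

lemma factor (x : ℝ) :
    8 * (Real.cos x - 1) + 8 * x * Real.sin x - 4 * x ^ 2 * Real.cos x
      - x ^ 3 * Real.sin x
    = 16 * (Real.sin (x / 2) - x / 2 * Real.cos (x / 2)) * gg (x / 2) := by
  have h2 : 2 * (x / 2) = x := by ring
  have hs := Real.sin_two_mul (x / 2)
  have hc := Real.cos_two_mul (x / 2)
  rw [h2] at hs hc
  rw [hs, hc]
  unfold gg
  have hpy := Real.sin_sq_add_cos_sq (x / 2)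
  linear_combination (16 - 4 * x ^ 2) * hpy

theorem unique_root_in_Ioc :
    ∃ x₀ : ℝ, x₀ ∈ Set.Ioo Real.pi (2 * Real.pi) ∧
      8 * (Real.cos x₀ - 1) + 8 * x₀ * Real.sin x₀ - 4 * x₀ ^ 2 * Real.cos x₀
        - x₀ ^ 3 * Real.sin x₀ = 0 ∧
      ∀ y ∈ Set.Ioc (0 : ℝ) (2 * Real.pi),
        8 * (Real.cos y - 1) + 8 * y * Real.sin y - 4 * y ^ 2 * Real.cos y
          - y ^ 3 * Real.sin y = 0 → y = x₀ := by
  have hπ1 : Real.pi > 3.141592 := Real.pi_gt_d6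
  have hπ2 : Real.pi < 3.141593 := Real.pi_lt_d6
  have hab : (2.1 : ℝ) ≤ Real.pi := by linarith
  have hmem : (0 : ℝ) ∈ Set.Ioo (gg Real.pi) (gg 2.1) := by
    constructor
    · rw [gg_pi]; linarith
    · exact gg_pos (by norm_num) le_rfl
  obtain ⟨u₀, hu₀, hgu₀⟩ := intermediate_value_Ioo' hab gg_cont.continuousOn hmem
  refine ⟨2 * u₀, ⟨by linarith [hu₀.1], by linarith [hu₀.2]⟩, ?_, ?_⟩
  · rw [factor]
    have : 2 * u₀ / 2 = u₀ := by ring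
    rw [this, hgu₀, mul_zero]
  · intro y hy hfy
    rw [factor] at hfy
    have hy2 : 0 < y / 2 := by linarith [hy.1]
    have hy2' : y / 2 ≤ Real.pi := by linarith [hy.2]
    have hphi := phi_pos hy2 hy2'
    have hg0 : gg (y / 2) = 0 := by
      rcases mul_eq_zero.1 hfy with h | h
      · exfalso; nlinarith
      · exact h
    have hy21 : 2.1 < y / 2 := by
      by_contra h
      push_neg at h
      exact absurd hg0 (ne_of_gt (gg_pos hy2 h))
    have := gg_anti.injOn ⟨hy21.le, hy2'⟩ ⟨hu₀.1.le, hu₀.2.le⟩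
      (by rw [hg0, hgu₀])
    linarith
end

section
/- Let p ∈ [1/2, 1), q = 1−p, and let X₁, …, Xₙ be i.i.d. with P(X₁ = √(q/p)) = p, P(X₁ = −√(p/q)) = q. Define μ(z) = E[X₁³·1{|X₁| < z}] and σ²(z) = E[X₁²·1{|X₁| ≥ z}]. Then for every ε > 0 with nε² ≥ p/q, sup_{0 < z ≤ ε√n} { μ(z) + z·σ²(z) } = (p² + q²)/√(pq) = E[|X₁|³]. That is, the Esseen fraction with γ = 1 equals the Lyapunov fraction for this two-point distribution. -/
open MeasureTheory

/-- The centered unit-variance two-point distribution `F_p`. -/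
noncomputable def twoPoint (p : ℝ) : Measure ℝ :=
  ENNReal.ofReal p • Measure.dirac (Real.sqrt ((1 - p) / p))
    + ENNReal.ofReal (1 - p) • Measure.dirac (-Real.sqrt (p / (1 - p)))

lemma integrable_dirac_of_meas {f : ℝ → ℝ} (hf : Measurable f) (a : ℝ) :
    Integrable f (Measure.dirac a) := by
  refine ⟨hf.aestronglyMeasurable, ?_⟩
  simp only [HasFiniteIntegral, lintegral_dirac]
  exact ENNReal.coe_lt_top

lemma integral_twoPoint {p : ℝ} (hp0 : 0 ≤ p) (hp1 : p ≤ 1) {f : ℝ → ℝ}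
    (hf : Measurable f) :
    ∫ x, f x ∂(twoPoint p)
    = p * f (Real.sqrt ((1 - p) / p)) + (1 - p) * f (-Real.sqrt (p / (1 - p))) := by
  unfold twoPoint
  rw [integral_add_measure, integral_smul_measure, integral_smul_measure,
    integral_dirac, integral_dirac]
  · rw [ENNReal.toReal_ofReal hp0, ENNReal.toReal_ofReal (by linarith), smul_eq_mul, smul_eq_mul]
  · exact (integrable_dirac_of_meas hf _).smul_measure ENNReal.ofReal_ne_top
  · exact (integrable_dirac_of_meas hf _).smul_measure ENNReal.ofReal_ne_top

set_option maxHeartbeats 1000000 in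
theorem twoPoint_esseen_eq_lyapunov (p : ℝ) (hp : p ∈ Set.Ico (1 / 2 : ℝ) 1)
    (n : ℕ) (hn : 0 < n) (ε : ℝ) (hε : 0 < ε)
    (hcond : p / (1 - p) ≤ (n : ℝ) * ε ^ 2) :
    sSup {y : ℝ | ∃ z : ℝ, 0 < z ∧ z ≤ ε * Real.sqrt n ∧
        y = (∫ x, (if |x| < z then x ^ 3 else 0) ∂(twoPoint p))
          + z * ∫ x, (if z ≤ |x| then x ^ 2 else 0) ∂(twoPoint p)}
      = (p ^ 2 + (1 - p) ^ 2) / Real.sqrt (p * (1 - p)) ∧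
    (p ^ 2 + (1 - p) ^ 2) / Real.sqrt (p * (1 - p)) = ∫ x, |x| ^ 3 ∂(twoPoint p) := by
  obtain ⟨hp2, hp1l⟩ := hp
  have hp0 : (0:ℝ) < p := by linarith
  have hq0 : (0:ℝ) < 1 - p := by linarith
  have hqp : 1 - p ≤ p := by linarith
  have hsp0 : 0 < Real.sqrt p := Real.sqrt_pos.2 hp0
  have hsq0 : 0 < Real.sqrt (1 - p) := Real.sqrt_pos.2 hq0
  set sp : ℝ := Real.sqrt p
  set sq : ℝ := Real.sqrt (1 - p)
  have hsp2 : sp ^ 2 = p := Real.sq_sqrt hp0.le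
  have hsq2 : sq ^ 2 = 1 - p := Real.sq_sqrt hq0.le
  have hsqsp : sq ≤ sp := Real.sqrt_le_sqrt hqp
  set a : ℝ := Real.sqrt ((1 - p) / p) with ha
  set b : ℝ := Real.sqrt (p / (1 - p)) with hb
  have haeq : a = sq / sp := by rw [ha, Real.sqrt_div hq0.le]
  have hbeq : b = sp / sq := by rw [hb, Real.sqrt_div hp0.le]
  have ha0 : 0 < a := by rw [haeq]; positivity
  have hb0 : 0 < b := by rw [hbeq]; positivity
  have hab : a ≤ b := by
    rw [haeq, hbeq, div_le_div_iff₀ hsp0 hsq0]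
    nlinarith
  have hspsq : Real.sqrt (p * (1 - p)) = sp * sq := Real.sqrt_mul hp0.le _
  set L : ℝ := (p ^ 2 + (1 - p) ^ 2) / Real.sqrt (p * (1 - p)) with hL
  have hLval : L = (1 - p) * a + p * b := by
    rw [hL, hspsq, haeq, hbeq]
    have h1 : (1 - p) * (sq / sp) = sq ^ 3 / sp := by rw [← hsq2]; ring
    have h2 : p * (sp / sq) = sp ^ 3 / sq := by rw [← hsp2]; ring
    rw [h1, h2, div_add_div _ _ hsp0.ne' hsq0.ne',
      show sq ^ 3 * sq + sp * sp ^ 3 = (sp ^ 2) ^ 2 + (sq ^ 2) ^ 2 by ring, hsp2, hsq2]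
  have hL0 : 0 ≤ L := by
    rw [hLval]; positivity
  -- b is within range
  have hbε : b ≤ ε * Real.sqrt n := by
    have h1 : b ≤ Real.sqrt ((n : ℝ) * ε ^ 2) := Real.sqrt_le_sqrt hcond
    rw [Real.sqrt_mul (Nat.cast_nonneg n), Real.sqrt_sq hε.le, mul_comm] at h1
    exact h1
  -- measurability of integrands
  have hm1 : ∀ z : ℝ, Measurable fun x : ℝ => if |x| < z then x ^ 3 else 0 := fun z =>
    Measurable.ite (measurableSet_lt (measurable_id.abs) measurable_const)
      (measurable_id.pow_const 3) measurable_const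
  have hm2 : ∀ z : ℝ, Measurable fun x : ℝ => if z ≤ |x| then x ^ 2 else 0 := fun z =>
    Measurable.ite (measurableSet_le measurable_const (measurable_id.abs))
      (measurable_id.pow_const 2) measurable_const
  have habs_a : |a| = a := abs_of_pos ha0
  have habs_b : |(-b)| = b := by rw [abs_neg, abs_of_pos hb0]
  -- value of the expression at z
  have hval : ∀ z : ℝ,
      (∫ x, (if |x| < z then x ^ 3 else 0) ∂(twoPoint p))
          + z * ∫ x, (if z ≤ |x| then x ^ 2 else 0) ∂(twoPoint p)
      = p * (if a < z then a ^ 3 else 0) + (1 - p) * (if b < z then -(b ^ 3) else 0)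
          + z * (p * (if z ≤ a then a ^ 2 else 0)
            + (1 - p) * (if z ≤ b then b ^ 2 else 0)) := by
    intro z
    rw [integral_twoPoint hp0.le hp1l.le (hm1 z), integral_twoPoint hp0.le hp1l.le (hm2 z)]
    rw [← ha, ← hb, habs_a, habs_b]
    have : (-b) ^ 3 = -(b ^ 3) := by ring
    rw [this]
    have : (-b) ^ 2 = b ^ 2 := by ring
    rw [this]
  have hpa2 : p * a ^ 2 = 1 - p := by
    rw [haeq, div_pow, hsp2, hsq2]; field_simp
  have hqb2 : (1 - p) * b ^ 2 = p := by
    rw [hbeq, div_pow, hsp2, hsq2]; field_simp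
  have hpa3 : p * a ^ 3 = (1 - p) * a := by
    calc p * a ^ 3 = p * a ^ 2 * a := by ring
      _ = (1 - p) * a := by rw [hpa2]
  have hqb3 : (1 - p) * b ^ 3 = p * b := by
    calc (1 - p) * b ^ 3 = (1 - p) * b ^ 2 * b := by ring
      _ = p * b := by rw [hqb2]
  -- upper bound
  have hub : ∀ y ∈ {y : ℝ | ∃ z : ℝ, 0 < z ∧ z ≤ ε * Real.sqrt n ∧
      y = (∫ x, (if |x| < z then x ^ 3 else 0) ∂(twoPoint p))
        + z * ∫ x, (if z ≤ |x| then x ^ 2 else 0) ∂(twoPoint p)}, y ≤ L := by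
    rintro y ⟨z, hz0, hzle, rfl⟩
    rw [hval z]
    rcases le_or_gt z a with hza | hza
    · -- z ≤ a : value = z
      rw [if_neg (not_lt.2 hza), if_neg (not_lt.2 (hza.trans hab)), if_pos hza,
        if_pos (hza.trans hab), hpa2, hqb2]
      have hzL : z ≤ a := hza
      have haL : a ≤ L := by
        rw [hLval]
        nlinarith [mul_le_mul_of_nonneg_left hab hp0.le]
      calc p * 0 + (1 - p) * 0 + z * (1 - p + p) = z := by ring
        _ ≤ L := hzL.trans haL
    · rcases le_or_gt z b with hzb | hzb
      · -- a < z ≤ b : value = (1-p)a + z p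
        rw [if_pos hza, if_neg (not_lt.2 hzb), if_neg (not_le.2 hza), if_pos hzb, hqb2]
        have : p * a ^ 3 + (1 - p) * 0 + z * (p * 0 + p) = (1 - p) * a + z * p := by
          rw [hpa3]; ring
        rw [this, hLval]
        have h := mul_le_mul_of_nonneg_right hzb hp0.le
        linarith
      · -- b < z : value = (1-p)a - p b ≤ 0
        rw [if_pos (hab.trans_lt hzb), if_pos hzb, if_neg (not_le.2 (hab.trans_lt hzb)),
          if_neg (not_le.2 hzb)]
        have : p * a ^ 3 + (1 - p) * -(b ^ 3) + z * (p * 0 + (1 - p) * 0)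
            = (1 - p) * a - p * b := by rw [hpa3, ← hqb3]; ring
        rw [this]
        have hle0 : (1 - p) * a - p * b ≤ 0 := by
          rw [haeq, hbeq, sub_nonpos,
            show (1 - p) * (sq / sp) = sq ^ 3 / sp by rw [← hsq2]; ring,
            show p * (sp / sq) = sp ^ 3 / sq by rw [← hsp2]; ring,
            div_le_div_iff₀ hsp0 hsq0]
          nlinarith [hsq0.le, hsp0.le, hsqsp]
        exact hle0.trans hL0
  -- attainment at z = b
  have hmem : L ∈ {y : ℝ | ∃ z : ℝ, 0 < z ∧ z ≤ ε * Real.sqrt n ∧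
      y = (∫ x, (if |x| < z then x ^ 3 else 0) ∂(twoPoint p))
        + z * ∫ x, (if z ≤ |x| then x ^ 2 else 0) ∂(twoPoint p)} := by
    refine ⟨b, hb0, hbε, ?_⟩
    rw [hval b]
    rcases eq_or_lt_of_le hab with heq | hlt
    · rw [if_neg (by rw [heq]; exact lt_irrefl b), if_neg (lt_irrefl b),
        if_pos (le_of_eq heq.symm), if_pos le_rfl, hpa2, hqb2]
      have : p * 0 + (1 - p) * 0 + b * (1 - p + p) = b := by ring
      rw [this, hLval, ← heq]
      ring
    · rw [if_pos hlt, if_neg (lt_irrefl b), if_neg (not_le.2 hlt), if_pos le_rfl, hqb2]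
      rw [hLval]
      rw [← hpa3]; ring
  constructor
  · exact le_antisymm (csSup_le ⟨L, hmem⟩ hub) (le_csSup ⟨L, hub⟩ hmem)
  · -- Lyapunov moment
    have hm3 : Measurable fun x : ℝ => |x| ^ 3 := (measurable_id.abs).pow_const 3
    rw [integral_twoPoint hp0.le hp1l.le hm3, ← ha, ← hb, habs_a, habs_b, hLval, hpa3.symm,
      hqb3.symm]
end

section
/- For θ ∈ (0, 2π) let a(θ) = 2(1−cos θ)/θ² − sin θ/(2θ), b(θ) = (1−cos θ)/θ⁴ − sin θ/(2θ³), and for τ > 0 define k(τ) = sup_{0<θ≤2π} { a(θ) − 8τ·√(a(θ)·b(θ)) }. Then k(τ) > 0 if and only if τ < π/4. -/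
open Real

noncomputable def kFun (τ : ℝ) : ℝ :=
  sSup {y : ℝ | ∃ θ : ℝ, 0 < θ ∧ θ ≤ 2 * Real.pi ∧
    y = a θ - 8 * τ * Real.sqrt (a θ * b θ)}

lemma sin_ge_cubic (x : ℝ) (hx : 0 ≤ x) : x - x ^ 3 / 6 ≤ Real.sin x := by
  have hder : ∀ y : ℝ, HasDerivAt (fun t => Real.sin t - t + t ^ 3 / 6)
      (Real.cos y - 1 + 3 * y ^ 2 / 6) y := fun y =>
    (((Real.hasDerivAt_sin y).sub (hasDerivAt_id y)).add
      ((hasDerivAt_pow 3 y).div_const 6)).congr_deriv (by norm_num)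
  have hmono : Monotone (fun t => Real.sin t - t + t ^ 3 / 6) := by
    apply monotone_of_deriv_nonneg (fun y => (hder y).differentiableAt)
    intro y
    rw [(hder y).deriv]
    nlinarith [Real.one_sub_sq_div_two_le_cos (x := y)]
  have h0 := hmono hx
  simp at h0
  linarith

lemma cos_le_quartic (x : ℝ) (hx : 0 ≤ x) : Real.cos x ≤ 1 - x ^ 2 / 2 + x ^ 4 / 24 := by
  have hder : ∀ y : ℝ, HasDerivAt (fun t => 1 - t ^ 2 / 2 + t ^ 4 / 24 - Real.cos t)
      (-(2 * y / 2) + 4 * y ^ 3 / 24 - -Real.sin y) y := fun y =>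
    (((hasDerivAt_const y 1).sub ((hasDerivAt_pow 2 y).div_const 2)).add
      ((hasDerivAt_pow 4 y).div_const 24)).sub (Real.hasDerivAt_cos y) |>.congr_deriv (by norm_num)
  have hmono : MonotoneOn (fun t => 1 - t ^ 2 / 2 + t ^ 4 / 24 - Real.cos t) (Set.Ici 0) := by
    apply monotoneOn_of_deriv_nonneg (convex_Ici 0)
      (fun y _ => (hder y).differentiableAt.continuousAt.continuousWithinAt)
      (fun y _ => (hder y).differentiableAt.differentiableWithinAt)
    intro y hy
    rw [interior_Ici] at hy
    rw [(hder y).deriv]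
    have := sin_ge_cubic y (le_of_lt hy)
    nlinarith
  have h0 := hmono (Set.self_mem_Ici) hx hx
  simp at h0
  linarith

lemma sin_sub_mul_cos_nonneg (x : ℝ) (hx : 0 ≤ x) (hx' : x ≤ π) :
    0 ≤ Real.sin x - x * Real.cos x := by
  rcases le_or_gt x (π / 2) with h | h
  · have h1 := sin_ge_cubic x hx
    have h2 := cos_le_quartic x hx
    have hx8 : x ^ 2 ≤ 8 := by nlinarith [Real.pi_lt_d2]
    nlinarith [mul_le_mul_of_nonneg_left h2 hx, pow_nonneg hx 3,
      mul_nonneg (pow_nonneg hx 3) (by linarith : (0:ℝ) ≤ 8 - x ^ 2)]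
  · have hc : Real.cos x ≤ 0 := Real.cos_nonpos_of_pi_div_two_le_of_le h.le (by linarith)
    have hs : 0 ≤ Real.sin x := Real.sin_nonneg_of_nonneg_of_le_pi hx hx'
    nlinarith

lemma hkey (x : ℝ) (hx : 0 < x) (hx' : x ≤ π) :
    0 ≤ (π ^ 2 - 2 * x ^ 2) * Real.sin x - x * (π ^ 2 - x ^ 2) * Real.cos x := by
  have hπ1 : (3.1415 : ℝ) < π := by linarith [Real.pi_gt_d6]
  have hπ2 : π < 3.1416 := by linarith [Real.pi_lt_d6]
  rcases le_or_gt (2 * x ^ 2) (π ^ 2) with hcase | hcase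
  · -- x ≤ π/√2 : Taylor bounds
    have h1 := sin_ge_cubic x hx.le
    have h2 := cos_le_quartic x hx.le
    have hA : 0 ≤ π ^ 2 - 2 * x ^ 2 := by linarith
    have hB : 0 ≤ x * (π ^ 2 - x ^ 2) := by nlinarith
    have e1 : (π ^ 2 - 2 * x ^ 2) * (x - x ^ 3 / 6) ≤ (π ^ 2 - 2 * x ^ 2) * Real.sin x :=
      mul_le_mul_of_nonneg_left h1 hA
    have e2 : x * (π ^ 2 - x ^ 2) * Real.cos x ≤
        x * (π ^ 2 - x ^ 2) * (1 - x ^ 2 / 2 + x ^ 4 / 24) := mul_le_mul_of_nonneg_left h2 hB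
    -- remaining polynomial: x^3 * Q(x^2) with Q > 0 always
    have hp1 : (9.869:ℝ) < π ^ 2 := by nlinarith
    have hp2 : π ^ 2 < 9.87 := by nlinarith
    have hC : (0:ℝ) ≤ 8 * π ^ 2 - 24 - (4 + π ^ 2) ^ 2 / 4 := by
      nlinarith [mul_nonneg (by linarith : (0:ℝ) ≤ π ^ 2 - 9.869)
        (by linarith : (0:ℝ) ≤ 9.87 - π ^ 2)]
    nlinarith [mul_nonneg (pow_nonneg hx.le 3) (sq_nonneg (x ^ 2 - (4 + π ^ 2) / 2)),
      mul_nonneg (pow_nonneg hx.le 3) hC]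
  · -- x ≥ π/√2 : substitute u = π - x
    obtain ⟨u, rfl⟩ : ∃ u, x = π - u := ⟨π - x, by ring⟩
    have hu0 : 0 ≤ u := by linarith
    have hub : u ≤ 0.9203 := by nlinarith
    rw [Real.sin_pi_sub, Real.cos_pi_sub]
    have hA : π ^ 2 - 2 * (π - u) ^ 2 ≤ 0 := by linarith
    have h1 : Real.sin u ≤ u := Real.sin_le hu0
    have h2 : 1 - u ^ 2 / 2 ≤ Real.cos u := Real.one_sub_sq_div_two_le_cos
    have hB : 0 ≤ (π - u) * (π ^ 2 - (π - u) ^ 2) := by nlinarith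
    have e1 : (π ^ 2 - 2 * (π - u) ^ 2) * u ≤ (π ^ 2 - 2 * (π - u) ^ 2) * Real.sin u :=
      mul_le_mul_of_nonpos_left h1 hA
    have e2 : (π - u) * (π ^ 2 - (π - u) ^ 2) * (1 - u ^ 2 / 2) ≤
        (π - u) * (π ^ 2 - (π - u) ^ 2) * Real.cos u := mul_le_mul_of_nonneg_left h2 hB
    have key : 0 ≤ (π ^ 2 - 2 * (π - u) ^ 2) * u +
        (π - u) * (π ^ 2 - (π - u) ^ 2) * (1 - u ^ 2 / 2) := by
      nlinarith [pow_le_pow_left₀ hu0 hub 2, pow_le_pow_left₀ hu0 hub 4, mul_nonneg hu0 hu0]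
    linarith [e1, e2, key]

lemma cos_half (θ : ℝ) : Real.cos θ = 1 - 2 * Real.sin (θ / 2) ^ 2 := by
  have h := Real.cos_two_mul' (θ / 2)
  rw [show 2 * (θ / 2) = θ by ring] at h
  have h2 := Real.sin_sq_add_cos_sq (θ / 2)
  linarith

lemma sin_half (θ : ℝ) : Real.sin θ = 2 * Real.sin (θ / 2) * Real.cos (θ / 2) := by
  have := Real.sin_two_mul (θ / 2)
  rw [show 2 * (θ / 2) = θ by ring] at this
  linarith

lemma b_eq (θ : ℝ) (hθ : θ ≠ 0) : b θ =
    2 * Real.sin (θ / 2) * (Real.sin (θ / 2) - θ / 2 * Real.cos (θ / 2)) / θ ^ 4 := by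
  rw [b, cos_half θ, sin_half θ]
  field_simp
  ring

lemma b_nonneg (θ : ℝ) (h1 : 0 < θ) (h2 : θ ≤ 2 * π) : 0 ≤ b θ := by
  rw [b_eq θ h1.ne']
  have hs : 0 ≤ Real.sin (θ / 2) :=
    Real.sin_nonneg_of_nonneg_of_le_pi (by linarith) (by linarith)
  have hm := sin_sub_mul_cos_nonneg (θ / 2) (by linarith) (by linarith)
  positivity

lemma a_eq (θ : ℝ) (hθ : θ ≠ 0) :
    a θ = θ ^ 2 * b θ + 2 * Real.sin (θ / 2) ^ 2 / θ ^ 2 := by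
  rw [a, b, cos_half θ]
  field_simp
  ring

lemma a_le_4pi2b (θ : ℝ) (h1 : 0 < θ) (h2 : θ ≤ 2 * π) : a θ ≤ 4 * π ^ 2 * b θ := by
  have hx := hkey (θ / 2) (by linarith) (by linarith)
  have hs : 0 ≤ Real.sin (θ / 2) :=
    Real.sin_nonneg_of_nonneg_of_le_pi (by linarith) (by linarith)
  have e : 4 * π ^ 2 * b θ - a θ =
      8 * Real.sin (θ / 2) * ((π ^ 2 - 2 * (θ / 2) ^ 2) * Real.sin (θ / 2) -
        θ / 2 * (π ^ 2 - (θ / 2) ^ 2) * Real.cos (θ / 2)) / θ ^ 4 := by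
    rw [a, b, cos_half θ, sin_half θ]
    field_simp
    ring
  nlinarith [div_nonneg (mul_nonneg (by linarith : (0:ℝ) ≤ 8 * Real.sin (θ / 2)) hx)
    (by positivity : (0:ℝ) ≤ θ ^ 4)]

lemma a_le_32 (θ : ℝ) (h1 : 0 < θ) : a θ ≤ 3 / 2 := by
  rw [a]
  have hc := Real.one_sub_sq_div_two_le_cos (x := θ)
  have hs : -θ ≤ Real.sin θ := by
    have := Real.abs_sin_le_abs (x := θ)
    rw [abs_of_pos h1] at this
    cases abs_cases (Real.sin θ) with
    | inl h => linarith [h.1]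
    | inr h => linarith [h.1]
  have e1 : 2 * (1 - Real.cos θ) / θ ^ 2 ≤ 1 := by
    rw [div_le_one (by positivity)]
    nlinarith
  have e2 : -(1 / 2 : ℝ) ≤ Real.sin θ / (2 * θ) := by
    rw [le_div_iff₀ (by linarith)]
    linarith
  linarith

theorem kFun_pos_iff (τ : ℝ) (hτ : 0 < τ) : 0 < kFun τ ↔ τ < Real.pi / 4 := by
  have hπ := Real.pi_pos
  obtain ⟨S, hS⟩ : ∃ S, S = {y : ℝ | ∃ θ : ℝ, 0 < θ ∧ θ ≤ 2 * Real.pi ∧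
    y = a θ - 8 * τ * Real.sqrt (a θ * b θ)} := ⟨_, rfl⟩
  have hkS : kFun τ = sSup S := by rw [kFun, hS]
  have hbdd : BddAbove S := by
    refine ⟨3 / 2, ?_⟩
    rw [hS]
    rintro y ⟨θ, hθ1, hθ2, rfl⟩
    have := a_le_32 θ hθ1
    have hsq : 0 ≤ 8 * τ * Real.sqrt (a θ * b θ) := by positivity
    linarith
  have hne : S.Nonempty := by
    rw [hS]
    exact ⟨a (2 * π) - 8 * τ * Real.sqrt (a (2 * π) * b (2 * π)),
      2 * π, by linarith, le_refl _, rfl⟩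
  constructor
  · -- forward, by contraposition
    intro hk
    by_contra hge
    push_neg at hge
    have hub : ∀ y ∈ S, y ≤ 0 := by
      rw [hS]
      rintro y ⟨θ, hθ1, hθ2, rfl⟩
      have hb := b_nonneg θ hθ1 hθ2
      have hsqrt : 0 ≤ Real.sqrt (a θ * b θ) := Real.sqrt_nonneg _
      rcases le_or_gt (a θ) 0 with ha | ha
      · nlinarith
      · have hab := a_le_4pi2b θ hθ1 hθ2
        have h2 : a θ ≤ 2 * π * Real.sqrt (a θ * b θ) := by
          apply le_of_pow_le_pow_left₀ (n := 2) two_ne_zero (by positivity)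
          rw [mul_pow, mul_pow, Real.sq_sqrt (by positivity)]
          nlinarith
        nlinarith
    have : kFun τ ≤ 0 := hkS ▸ csSup_le hne hub
    linarith
  · -- reverse
    intro hτπ
    obtain ⟨θ, hθ⟩ : ∃ θ : ℝ, θ = π + 4 * τ := ⟨_, rfl⟩
    have hθ1 : 0 < θ := by linarith
    have hθ2 : θ ≤ 2 * π := by linarith
    have hb := b_nonneg θ hθ1 hθ2
    have hsin : 0 < Real.sin (θ / 2) := by
      apply Real.sin_pos_of_pos_of_lt_pi <;> [linarith; linarith]
    have ha : 64 * τ ^ 2 * b θ < a θ := by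
      rw [a_eq θ hθ1.ne']
      have h64 : 64 * τ ^ 2 < θ ^ 2 := by nlinarith
      have hpos : 0 < 2 * Real.sin (θ / 2) ^ 2 / θ ^ 2 := by positivity
      have h1 : 64 * τ ^ 2 * b θ ≤ θ ^ 2 * b θ := mul_le_mul_of_nonneg_right h64.le hb
      linarith
    have ha0 : 0 < a θ := by
      rw [a_eq θ hθ1.ne']
      have hpos : 0 < 2 * Real.sin (θ / 2) ^ 2 / θ ^ 2 := by positivity
      nlinarith
    have hlt : 8 * τ * Real.sqrt (a θ * b θ) < a θ := by
      apply lt_of_pow_lt_pow_left₀ 2 ha0.le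
      rw [mul_pow, mul_pow, Real.sq_sqrt (by positivity)]
      nlinarith
    have hmem : a θ - 8 * τ * Real.sqrt (a θ * b θ) ∈ S := by
      rw [hS]; exact ⟨θ, hθ1, hθ2, rfl⟩
    have := le_csSup hbdd hmem
    rw [hkS]
    linarith
end
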